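/- arXiv:0910.5431 — 4 statements merged into one kernel-verified Lean document; each statement's English description precedes it below -/
import Mathlib

section
/- Let {X(n), n ≥ 1} be a strictly stationary ergodic real-valued sequence with E[X(1)] < 0 and E[|X(1)|] < ∞. For x ≥ 0 define W_x(0) := x and W_x(n+1) := max(W_x(n) + X(n+1), 0) (Lindley's recursion). Then for any two initial conditions x, y ≥ 0, almost surely there exists a finite N such that W_x(n) = W_y(n) for all n ≥ N; that is, solutions of Lindley's recursion started from different initial conditions couple in almost surely finite time. -/
open MeasureTheory Filter

namespace LindleyAux

variable {Y : Type*} [MeasurableSpace Y]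

/-- Garsia's recursive maximal function: `MX T h K u = max_{0 ≤ n ≤ K} S_n h u`. -/
noncomputable def MX (T : Y → Y) (h : Y → ℝ) : ℕ → Y → ℝ
  | 0 => fun _ => 0
  | (K+1) => fun u => max (h u + MX T h K (T u)) 0

lemma MX_nonneg (T : Y → Y) (h : Y → ℝ) : ∀ K u, 0 ≤ MX T h K u
  | 0, _ => le_refl 0
  | (K+1), u => le_max_right _ _

lemma MX_mono (T : Y → Y) (h : Y → ℝ) : ∀ K u, MX T h K u ≤ MX T h (K+1) u
  | 0, u => MX_nonneg T h 1 u
  | (K+1), u => by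
      have := MX_mono T h K (T u)
      show max (h u + MX T h K (T u)) 0 ≤ max (h u + MX T h (K+1) (T u)) 0
      exact max_le_max (by linarith) le_rfl

lemma MX_mono' (T : Y → Y) (h : Y → ℝ) {K L : ℕ} (hKL : K ≤ L) (u : Y) :
    MX T h K u ≤ MX T h L u := by
  induction L with
  | zero => simpa [Nat.le_zero.mp hKL] using le_rfl
  | succ L ih =>
    rcases Nat.lt_or_ge K (L+1) with hK | hK
    · exact (ih (Nat.lt_succ_iff.mp hK)).trans (MX_mono T h L u)
    · have : K = L + 1 := le_antisymm hKL hK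
      simp [this]

lemma MX_ge_birkhoff (T : Y → Y) (h : Y → ℝ) : ∀ n u, birkhoffSum T h n u ≤ MX T h n u
  | 0, u => by simp [birkhoffSum, MX]
  | (n+1), u => by
      have := MX_ge_birkhoff T h n (T u)
      rw [birkhoffSum_succ']
      simp only [MX]
      exact le_max_of_le_left (by linarith)

lemma MX_measurable {T : Y → Y} {h : Y → ℝ} (hT : Measurable T) (hh : Measurable h) :
    ∀ K, Measurable (MX T h K)
  | 0 => measurable_const
  | (K+1) => ((hh.add ((MX_measurable hT hh K).comp hT)).max measurable_const)

lemma MX_integrable {ν : Measure Y} {T : Y → Y} {h : Y → ℝ}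
    (hT : MeasurePreserving T ν ν) (hh : Measurable h) (hint : Integrable h ν) :
    ∀ K, Integrable (MX T h K) ν
  | 0 => by simpa [MX] using (integrable_const (0:ℝ))
  | (K+1) => by
      have hK := MX_integrable hT hh hint K
      have hcomp : Integrable (fun u => MX T h K (T u)) ν :=
        (hT.integrable_comp hK.aestronglyMeasurable).mpr hK
      exact (hint.add hcomp).pos_part

/-- Garsia's maximal ergodic inequality. -/
lemma met {ν : Measure Y} [IsProbabilityMeasure ν] {T : Y → Y} {h : Y → ℝ}
    (hT : MeasurePreserving T ν ν) (hh : Measurable h) (hint : Integrable h ν) (K : ℕ) :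
    0 ≤ ∫ u, Set.indicator {u | 0 < MX T h K u} h u ∂ν := by
  have hpt : ∀ u, MX T h K u - MX T h K (T u) ≤
      Set.indicator {u | 0 < MX T h K u} h u := by
    intro u
    by_cases hu : 0 < MX T h K u
    · rw [Set.indicator_of_mem (show u ∈ {u | 0 < MX T h K u} from hu) h]
      cases K with
      | zero => simp [MX] at hu
      | succ K =>
        have h1 : MX T h (K+1) u = h u + MX T h K (T u) := by
          by_contra hcon
          have : MX T h (K+1) u = 0 := by
            simp only [MX] at hu hcon ⊢
            rcases max_cases (h u + MX T h K (T u)) 0 with ⟨he, _⟩ | ⟨he, _⟩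
            · exact absurd he hcon
            · exact he
          simp [this] at hu
        have h2 : MX T h K (T u) ≤ MX T h (K+1) (T u) := MX_mono T h K (T u)
        linarith
    · rw [Set.indicator_of_notMem (show u ∉ {u | 0 < MX T h K u} from hu) h]
      have h1 : MX T h K u = 0 :=
        le_antisymm (not_lt.mp hu) (MX_nonneg T h K u)
      have h2 : 0 ≤ MX T h K (T u) := MX_nonneg T h K (T u)
      linarith
  have hMint := MX_integrable hT hh hint K
  have hMTint : Integrable (fun u => MX T h K (T u)) ν :=
    (hT.integrable_comp hMint.aestronglyMeasurable).mpr hMint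
  have hIind : Integrable (Set.indicator {u | 0 < MX T h K u} h) ν :=
    hint.indicator (measurableSet_lt measurable_const (MX_measurable hT.measurable hh K))
  have hsub : ∫ u, (MX T h K u - MX T h K (T u)) ∂ν = 0 := by
    rw [integral_sub hMint hMTint]
    have : ∫ u, MX T h K (T u) ∂ν = ∫ u, MX T h K u ∂ν := by
      rw [← integral_map hT.measurable.aemeasurable
        (MX_measurable hT.measurable hh K).aestronglyMeasurable, hT.map_eq]
    rw [this, sub_self]
  calc (0:ℝ) = ∫ u, (MX T h K u - MX T h K (T u)) ∂ν := hsub.symm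
    _ ≤ ∫ u, Set.indicator {u | 0 < MX T h K u} h u ∂ν :=
        integral_mono (hMint.sub hMTint) hIind hpt


/-- Under an ergodic measure-preserving map with negative mean, Birkhoff sums
a.s. drop below any level. -/
lemma key {ν : Measure Y} [IsProbabilityMeasure ν]
    {T : Y → Y} {f : Y → ℝ} (hf : Measurable f) (herg : Ergodic T ν)
    (hint : Integrable f ν) (hneg : ∫ u, f u ∂ν < 0) :
    ∀ᵐ u ∂ν, ∀ k : ℕ, ∃ n, birkhoffSum T f n u ≤ -(k : ℝ) := by
  have hT : MeasurePreserving T ν ν := herg.toMeasurePreserving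
  set α : ℝ := (∫ u, f u ∂ν) / 2 with hα
  have hα0 : α < 0 := by rw [hα]; linarith
  set h : Y → ℝ := fun u => f u - α with hh
  have hhm : Measurable h := hf.sub measurable_const
  have hhint : Integrable h ν := hint.sub (integrable_const α)
  have hhint' : ∫ u, h u ∂ν = ∫ u, f u ∂ν - α := by
    rw [hh]
    rw [integral_sub hint (integrable_const α), integral_const]
    simp [measure_univ]
  have hhneg : ∫ u, h u ∂ν < 0 := by rw [hhint', hα]; linarith
  have hbs : ∀ n u, birkhoffSum T f n u = birkhoffSum T h n u + n * α := by
    intro n u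
    have : birkhoffSum T h n u = birkhoffSum T f n u - n * α := by
      simp only [birkhoffSum, hh, Finset.sum_sub_distrib, Finset.sum_const,
        Finset.card_range, nsmul_eq_mul]
    linarith
  set E : Set Y := ⋂ k : ℕ, ⋃ n : ℕ, {u | (k : ℝ) < birkhoffSum T h n u} with hE
  have hSm : ∀ n, Measurable (birkhoffSum T h n) := fun n =>
    Finset.measurable_sum _ fun k _ => hhm.comp (hT.measurable.iterate k)
  have hEm : MeasurableSet E :=
    MeasurableSet.iInter fun k => MeasurableSet.iUnion fun n =>
      measurableSet_lt measurable_const (hSm n)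
  have hshift : ∀ n u, birkhoffSum T h n (T u) = birkhoffSum T h (n + 1) u - h u := by
    intro n u; rw [birkhoffSum_succ']; ring
  have hEinv : T ⁻¹' E = E := by
    ext u
    simp only [hE, Set.mem_preimage, Set.mem_iInter, Set.mem_iUnion, Set.mem_setOf_eq]
    have hceil : |h u| ≤ (Nat.ceil |h u| : ℝ) := Nat.le_ceil _
    constructor
    · intro hu k
      obtain ⟨n, hn⟩ := hu (k + Nat.ceil |h u|)
      refine ⟨n + 1, ?_⟩
      rw [hshift] at hn
      have h1 := neg_abs_le (h u)
      push_cast at hn ⊢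
      linarith
    · intro hu k
      obtain ⟨m, hm⟩ := hu (k + Nat.ceil |h u|)
      match m, hm with
      | 0, hm =>
        exfalso
        rw [birkhoffSum_zero] at hm
        have : (0:ℝ) ≤ ((k + Nat.ceil |h u| : ℕ) : ℝ) := Nat.cast_nonneg _
        linarith
      | (n + 1), hm =>
        refine ⟨n, ?_⟩
        rw [hshift]
        have h1 := le_abs_self (h u)
        push_cast at hm ⊢
        linarith
  have hE0 : ν E = 0 := by
    rcases herg.toPreErgodic.measure_self_or_compl_eq_zero hEm hEinv with h0 | h1
    · exact h0
    · exfalso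
      set A : ℕ → Set Y := fun K => {u | 0 < MX T h K u} with hA
      have hAm : ∀ K, MeasurableSet (A K) := fun K =>
        measurableSet_lt measurable_const (MX_measurable hT.measurable hhm K)
      have hAmono : ∀ K L, K ≤ L → A K ⊆ A L := by
        intro K L hKL u hu
        exact lt_of_lt_of_le hu (MX_mono' T h hKL u)
      have hEA : E ⊆ ⋃ K, A K := by
        intro u hu
        simp only [hE, Set.mem_iInter, Set.mem_iUnion, Set.mem_setOf_eq] at hu
        obtain ⟨n, hn⟩ := hu 0
        refine Set.mem_iUnion.mpr ⟨n, ?_⟩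
        have : (0:ℝ) < birkhoffSum T h n u := by exact_mod_cast hn
        exact lt_of_lt_of_le this (MX_ge_birkhoff T h n u)
      have hlim : Tendsto (fun K => ∫ u, Set.indicator (A K) h u ∂ν) atTop
          (nhds (∫ u, Set.indicator (⋃ K, A K) h u ∂ν)) := by
        apply tendsto_integral_of_dominated_convergence (fun u => |h u|)
        · intro K; exact (hhint.indicator (hAm K)).aestronglyMeasurable
        · exact hhint.abs
        · intro K
          filter_upwards with u
          by_cases hu : u ∈ A K
          · rw [Set.indicator_of_mem hu]; simp [Real.norm_eq_abs]
          · rw [Set.indicator_of_notMem hu]; simp [abs_nonneg]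
        · filter_upwards with u
          by_cases hu : u ∈ ⋃ K, A K
          · obtain ⟨K0, hK0⟩ := Set.mem_iUnion.mp hu
            have hev : ∀ᶠ K in atTop, Set.indicator (A K) h u
                = Set.indicator (⋃ K, A K) h u := by
              refine eventually_atTop.mpr ⟨K0, fun K hK => ?_⟩
              rw [Set.indicator_of_mem (hAmono K0 K hK hK0),
                Set.indicator_of_mem hu]
            exact Tendsto.congr'
              (show (fun _ : ℕ => Set.indicator (⋃ K, A K) h u)
                  =ᶠ[atTop] fun K => Set.indicator (A K) h u from
                hev.mono fun K hK => hK.symm) tendsto_const_nhds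
          · have hev : ∀ K, Set.indicator (A K) h u = Set.indicator (⋃ K, A K) h u := by
              intro K
              rw [Set.indicator_of_notMem hu,
                Set.indicator_of_notMem (fun hc => hu (Set.mem_iUnion.mpr ⟨K, hc⟩))]
            exact Tendsto.congr (fun K => (hev K).symm) tendsto_const_nhds
      have hge : 0 ≤ ∫ u, Set.indicator (⋃ K, A K) h u ∂ν :=
        ge_of_tendsto hlim (Filter.Eventually.of_forall fun K => met hT hhm hhint K)
      have hfull : ν (⋃ K, A K)ᶜ = 0 :=
        measure_mono_null (Set.compl_subset_compl.mpr hEA) h1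
      have hcong : Set.indicator (⋃ K, A K) h =ᵐ[ν] h := by
        have : ∀ᵐ u ∂ν, u ∈ ⋃ K, A K := by
          rw [MeasureTheory.ae_iff]
          have heq : {a | ¬ a ∈ ⋃ K, A K} = (⋃ K, A K)ᶜ := rfl
          rw [heq]; exact hfull
        filter_upwards [this] with u hu
        rw [Set.indicator_of_mem hu]
      rw [integral_congr_ae hcong] at hge
      linarith
  have hae : ∀ᵐ u ∂ν, u ∉ E := by
    rw [MeasureTheory.ae_iff]
    simpa only [not_not, Set.setOf_mem_eq] using hE0
  filter_upwards [hae] with u hu k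
  simp only [hE, Set.mem_iInter, Set.mem_iUnion, Set.mem_setOf_eq, not_forall,
    not_exists, not_lt] at hu
  obtain ⟨k0, hk0⟩ := hu
  obtain ⟨n, hn⟩ := exists_nat_ge (((k0 : ℝ) + k) / (-α))
  refine ⟨n, ?_⟩
  have hα0' : (0:ℝ) < -α := by linarith
  have h2 : (k0 : ℝ) + k ≤ n * (-α) := by
    rw [div_le_iff₀ hα0'] at hn
    exact hn
  rw [hbs]
  have := hk0 n
  linarith

end LindleyAux


/-- **Coupling of solutions to Lindley's recursion.**
If `{X n}` is a strictly stationary, ergodic real-valued sequence with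
`E[|X 0|] < ∞` and `E[X 0] < 0`, and for `x ≥ 0` the process `W x` satisfies
Lindley's recursion `W x 0 = x`, `W x (n+1) = max (W x n + X n, 0)`
(here `X n` is the `(n+1)`-st increment, 0-based indexing), then for any two
initial conditions `x, y ≥ 0`, almost surely the two solutions couple in
finite time: there is a finite `N` with `W x n = W y n` for all `n ≥ N`. -/
theorem lindley_coupling
    {Ω : Type*} [MeasurableSpace Ω] (μ : Measure Ω) [IsProbabilityMeasure μ]
    (X : ℕ → Ω → ℝ) (hmeas : ∀ n, Measurable (X n))
    -- strict stationarity: every shift of the sequence has the same law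
    (hstat : ∀ k : ℕ,
      Measure.map (fun ω => fun n => X (n + k) ω) μ
        = Measure.map (fun ω => fun n => X n ω) μ)
    -- ergodicity of the shift map with respect to the law of the sequence
    (herg : Ergodic (fun x : ℕ → ℝ => fun n => x (n + 1))
      (Measure.map (fun ω => fun n => X n ω) μ))
    (hint : Integrable (X 0) μ)
    (hneg : ∫ ω, X 0 ω ∂μ < 0)
    -- Lindley's recursion started from initial condition `x`
    (W : ℝ → ℕ → Ω → ℝ)
    (hW0 : ∀ x ω, W x 0 ω = x)
    (hWrec : ∀ x n ω, W x (n + 1) ω = max (W x n ω + X n ω) 0) :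
    ∀ x y : ℝ, 0 ≤ x → 0 ≤ y →
      ∀ᵐ ω ∂μ, ∃ N : ℕ, ∀ n ≥ N, W x n ω = W y n ω := by
  intro x y hx hy
  classical
  let g : Ω → (ℕ → ℝ) := fun ω => fun n => X n ω
  let T : (ℕ → ℝ) → (ℕ → ℝ) := fun u => fun n => u (n + 1)
  let f : (ℕ → ℝ) → ℝ := fun u => u 0
  have hgm : Measurable g := measurable_pi_lambda _ hmeas
  have hTm : Measurable T := measurable_pi_lambda _ fun n => measurable_pi_apply (n + 1)
  have hfm : Measurable f := measurable_pi_apply 0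
  haveI : IsProbabilityMeasure (Measure.map g μ) :=
    Measure.isProbabilityMeasure_map hgm.aemeasurable
  have herg' : Ergodic T (Measure.map g μ) := herg
  have hfint : Integrable f (Measure.map g μ) := by
    rw [integrable_map_measure hfm.aestronglyMeasurable hgm.aemeasurable]
    exact hint
  have hfneg : ∫ u, f u ∂(Measure.map g μ) < 0 := by
    rw [integral_map hgm.aemeasurable hfm.aestronglyMeasurable]
    exact hneg
  have hkey := LindleyAux.key hfm herg' hfint hfneg
  -- measurability of the a.e. property
  have hSm : ∀ n, Measurable (birkhoffSum T f n) := fun n =>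
    Finset.measurable_sum _ fun k _ => hfm.comp (hTm.iterate k)
  have hPm : MeasurableSet
      {u : ℕ → ℝ | ∀ k : ℕ, ∃ n, birkhoffSum T f n u ≤ -(k : ℝ)} := by
    have : {u : ℕ → ℝ | ∀ k : ℕ, ∃ n, birkhoffSum T f n u ≤ -(k : ℝ)}
        = ⋂ k : ℕ, ⋃ n : ℕ, {u | birkhoffSum T f n u ≤ -(k : ℝ)} := by
      ext u; simp
    rw [this]
    exact MeasurableSet.iInter fun k => MeasurableSet.iUnion fun n =>
      measurableSet_le (hSm n) measurable_const
  have hae : ∀ᵐ ω ∂μ, ∀ k : ℕ, ∃ n, birkhoffSum T f n (g ω) ≤ -(k : ℝ) :=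
    (MeasureTheory.ae_map_iff hgm.aemeasurable hPm).mp hkey
  -- identify the Birkhoff sums with partial sums of X
  have hiter : ∀ (j : ℕ) (u : ℕ → ℝ), T^[j] u = fun i => u (i + j) := by
    intro j
    induction j with
    | zero => intro u; funext i; simp
    | succ j ih =>
      intro u
      rw [Function.iterate_succ_apply, ih]
      funext i
      show u (i + j + 1) = u (i + (j + 1))
      rw [Nat.add_assoc]
  have hbsum : ∀ (n : ℕ) (ω : Ω),
      birkhoffSum T f n (g ω) = ∑ j ∈ Finset.range n, X j ω := by
    intro n ω
    unfold birkhoffSum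
    refine Finset.sum_congr rfl fun j _ => ?_
    rw [hiter j (g ω)]
    show g ω (0 + j) = X j ω
    simp [g]
  -- deterministic Lindley analysis
  filter_upwards [hae] with ω hω
  obtain ⟨n, hn⟩ := hω ⌈max x y⌉₊
  have hsum : ∑ j ∈ Finset.range n, X j ω ≤ -max x y := by
    rw [hbsum] at hn
    have := Nat.le_ceil (max x y)
    linarith
  have hW0nn : ∀ m, 0 ≤ W 0 m ω := by
    intro m
    cases m with
    | zero => rw [hW0]
    | succ m => rw [hWrec]; exact le_max_right _ _
  have hform : ∀ z : ℝ, 0 ≤ z → ∀ m,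
      W z m ω = max (W 0 m ω) (z + ∑ j ∈ Finset.range m, X j ω) := by
    intro z hz m
    induction m with
    | zero => simp [hW0, max_eq_right hz]
    | succ m ih =>
      rw [hWrec, ih, hWrec 0, Finset.sum_range_succ, ← max_add_add_right,
        sup_right_comm, add_assoc]
  have hzero : ∀ z : ℝ, 0 ≤ z → z ≤ max x y → W z n ω = W 0 n ω := by
    intro z hz hzc
    rw [hform z hz n]
    apply max_eq_left
    have hle : z + ∑ j ∈ Finset.range n, X j ω ≤ 0 := by linarith
    exact hle.trans (hW0nn n)
  refine ⟨n, fun m hm => ?_⟩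
  induction m, hm using Nat.le_induction with
  | base => rw [hzero x hx (le_max_left x y), hzero y hy (le_max_right x y)]
  | succ m hm ih => rw [hWrec, hWrec, ih]
end

section
/- Let {X(n), n ≥ 0} be a Markov chain on a finite state space {1, ..., M} with irreducible transition matrix Π = (π_{i,j}), taking real values f(1), ..., f(M), and let S(n) := f(X(1)) + ... + f(X(n)). Then for every θ ∈ ℝ, the scaled cumulant generating function satisfies λ(θ) := lim_{n→∞} (1/n) log E[exp(θ S(n))] = log ρ(Π D_θ), where D_θ is the diagonal matrix with diagonal entries exp(θ f(1)), ..., exp(θ f(M)) and ρ denotes the spectral radius. -/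
open MeasureTheory Filter ProbabilityTheory ENNReal

/-- The spectral radius of a real square matrix: the maximum modulus of its
(complex) eigenvalues. -/
noncomputable def specRad {M : ℕ} (A : Matrix (Fin M) (Fin M) ℝ) : ℝ :=
  (spectralRadius ℂ (A.map (fun x => (x : ℂ)))).toReal

/-- The diagonal matrix `D_θ` with entries `exp (θ f i)`. -/
noncomputable def Dmat {M : ℕ} (f : Fin M → ℝ) (θ : ℝ) :
    Matrix (Fin M) (Fin M) ℝ :=
  Matrix.diagonal fun i => Real.exp (θ * f i)

namespace MarkovAux

open Finset NNReal

attribute [local instance] Matrix.linftyOpNormedRing Matrix.linftyOpNormedAlgebra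

variable {Ω : Type*} [MeasurableSpace Ω] {M : ℕ}

lemma pow_entry_nonneg (A : Matrix (Fin M) (Fin M) ℝ) (hA : ∀ i j, 0 ≤ A i j) :
    ∀ n i j, 0 ≤ (A ^ n) i j := by
  intro n
  induction n with
  | zero => intro i j; rw [pow_zero]; by_cases h : i = j <;> simp [Matrix.one_apply, h]
  | succ n ih =>
    intro i j
    rw [pow_succ, Matrix.mul_apply]
    exact Finset.sum_nonneg fun k _ => mul_nonneg (ih i k) (hA k j)

lemma pow_add_entry_ge (A : Matrix (Fin M) (Fin M) ℝ) (hA : ∀ i j, 0 ≤ A i j)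
    (a b : ℕ) (i k j : Fin M) :
    (A ^ a) i k * (A ^ b) k j ≤ (A ^ (a + b)) i j := by
  rw [pow_add, Matrix.mul_apply]
  exact Finset.single_le_sum
    (f := fun l => (A ^ a) i l * (A ^ b) l j)
    (fun l _ => mul_nonneg (pow_entry_nonneg A hA a i l) (pow_entry_nonneg A hA b l j))
    (Finset.mem_univ k)

lemma pow_entry_ge_smul (A P : Matrix (Fin M) (Fin M) ℝ)
    (hP : ∀ i j, 0 ≤ P i j) (c : ℝ) (hc : 0 ≤ c)
    (h : ∀ i j, c * P i j ≤ A i j) :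
    ∀ m i j, c ^ m * (P ^ m) i j ≤ (A ^ m) i j := by
  have hA : ∀ i j, 0 ≤ A i j := fun i j => le_trans (mul_nonneg hc (hP i j)) (h i j)
  intro m
  induction m with
  | zero => intro i j; simp
  | succ m ih =>
    intro i j
    simp only [pow_succ, Matrix.mul_apply]
    rw [Finset.mul_sum]
    apply Finset.sum_le_sum
    intro k _
    calc c ^ m * c * ((P ^ m) i k * P k j)
        = (c ^ m * (P ^ m) i k) * (c * P k j) := by ring
      _ ≤ (A ^ m) i k * A k j :=
          mul_le_mul (ih i k) (h k j) (mul_nonneg hc (hP k j))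
            (pow_entry_nonneg A hA m i k)

-- row sums of powers: lower recursion
lemma rowsum_pow_succ_ge (A : Matrix (Fin M) (Fin M) ℝ) (hA : ∀ i j, 0 ≤ A i j)
    (c : ℝ) (hc : ∀ i, c ≤ ∑ j, A i j) (hc0 : 0 ≤ c)
    (s : ℕ) (k : Fin M) :
    c * ∑ j, (A ^ s) k j ≤ ∑ j, (A ^ (s + 1)) k j := by
  have : ∑ j, (A ^ (s+1)) k j = ∑ l, (A ^ s) k l * ∑ j, A l j := by
    simp only [pow_succ, Matrix.mul_apply, Finset.mul_sum]
    rw [Finset.sum_comm]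
  rw [this, Finset.mul_sum]
  apply Finset.sum_le_sum
  intro l _
  rw [mul_comm c]
  exact mul_le_mul_of_nonneg_left (hc l) (pow_entry_nonneg A hA s k l)

lemma rowsum_pow_succ_le (A : Matrix (Fin M) (Fin M) ℝ) (hA : ∀ i j, 0 ≤ A i j)
    (c : ℝ) (hc : ∀ i, ∑ j, A i j ≤ c)
    (s : ℕ) (k : Fin M) :
    ∑ j, (A ^ (s + 1)) k j ≤ c * ∑ j, (A ^ s) k j := by
  have : ∑ j, (A ^ (s+1)) k j = ∑ l, (A ^ s) k l * ∑ j, A l j := by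
    simp only [pow_succ, Matrix.mul_apply, Finset.mul_sum]
    rw [Finset.sum_comm]
  rw [this, Finset.mul_sum]
  apply Finset.sum_le_sum
  intro l _
  rw [mul_comm c]
  exact mul_le_mul_of_nonneg_left (hc l) (pow_entry_nonneg A hA s k l)

lemma rowsum_pow_add_ge (A : Matrix (Fin M) (Fin M) ℝ) (hA : ∀ i j, 0 ≤ A i j)
    (c : ℝ) (hc : ∀ i, c ≤ ∑ j, A i j) (hc0 : 0 ≤ c)
    (s t : ℕ) (k : Fin M) :
    c ^ t * ∑ j, (A ^ s) k j ≤ ∑ j, (A ^ (s + t)) k j := by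
  induction t with
  | zero => simp
  | succ t ih =>
    have h1 := rowsum_pow_succ_ge A hA c hc hc0 (s + t) k
    calc c ^ (t+1) * ∑ j, (A ^ s) k j = c * (c ^ t * ∑ j, (A ^ s) k j) := by ring
      _ ≤ c * ∑ j, (A ^ (s + t)) k j := mul_le_mul_of_nonneg_left ih hc0
      _ ≤ ∑ j, (A ^ (s + t + 1)) k j := h1
      _ = ∑ j, (A ^ (s + (t+1))) k j := by ring_nf

lemma totsum_pow_add_le (A : Matrix (Fin M) (Fin M) ℝ) (hA : ∀ i j, 0 ≤ A i j)
    (c : ℝ) (hc : ∀ i, ∑ j, A i j ≤ c) (hc0 : 0 ≤ c)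
    (s t : ℕ) :
    ∑ k, ∑ j, (A ^ (s + t)) k j ≤ c ^ t * ∑ k, ∑ j, (A ^ s) k j := by
  induction t with
  | zero => simp
  | succ t ih =>
    calc ∑ k, ∑ j, (A ^ (s + (t+1))) k j = ∑ k, ∑ j, (A ^ (s + t + 1)) k j := by ring_nf
      _ ≤ ∑ k, c * ∑ j, (A ^ (s+t)) k j :=
          Finset.sum_le_sum fun k _ => rowsum_pow_succ_le A hA c hc (s+t) k
      _ = c * ∑ k, ∑ j, (A ^ (s+t)) k j := by rw [Finset.mul_sum]
      _ ≤ c * (c ^ t * ∑ k, ∑ j, (A ^ s) k j) := mul_le_mul_of_nonneg_left ih hc0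
      _ = c ^ (t+1) * ∑ k, ∑ j, (A ^ s) k j := by ring

lemma exists_K [Nonempty (Fin M)] (A : Matrix (Fin M) (Fin M) ℝ)
    (hA : ∀ i j, 0 ≤ A i j) (c1 c2 : ℝ) (hc1 : 0 < c1)
    (hrs : ∀ i, c1 ≤ ∑ j, A i j) (hrs2 : ∀ i, ∑ j, A i j ≤ c2)
    (hirrA : ∀ i j, ∃ m : ℕ, 0 < (A ^ m) i j) (i0 : Fin M) :
    ∃ K : ℝ, 0 < K ∧ ∃ N : ℕ, ∀ n ≥ N,
      K * (∑ k, ∑ j, (A ^ n) k j) ≤ ∑ j, (A ^ n) i0 j := by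
  have hc2 : 0 < c2 := lt_of_lt_of_le hc1 (le_trans (hrs (Classical.arbitrary _))
    (hrs2 (Classical.arbitrary _)))
  choose m hm using fun k => hirrA i0 k
  set mS : ℕ := Finset.univ.sup m with hmS
  set c : ℝ := min c1 1 with hcdef
  have hc0 : 0 < c := lt_min hc1 one_pos
  have hcle1 : c ≤ 1 := min_le_right _ _
  set δ : ℝ := Finset.univ.inf' Finset.univ_nonempty (fun k => (A ^ m k) i0 k) with hδ
  have hδpos : 0 < δ := by
    rw [hδ, Finset.lt_inf'_iff]
    exact fun k _ => hm k
  have hMpos : (0:ℝ) < M := by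
    have : 0 < M := Fin.pos_iff_nonempty.2 ‹_›
    exact_mod_cast this
  refine ⟨δ * c ^ mS / ((M:ℝ) * c2 ^ mS),
    div_pos (by positivity) (mul_pos hMpos (pow_pos hc2 _)), mS, fun n hn => ?_⟩
  -- main bound: for every k, δ * c ^ mS * R_{n - mS}(k) ≤ R_n(i0)
  have key : ∀ k : Fin M, δ * c ^ mS * ∑ j, (A ^ (n - mS)) k j ≤ ∑ j, (A ^ n) i0 j := by
    intro k
    have hmk : m k ≤ mS := Finset.le_sup (Finset.mem_univ k)
    have hexp : m k + (n - m k) = n := by omega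
    have h1 : (A ^ m k) i0 k * ∑ j, (A ^ (n - m k)) k j ≤ ∑ j, (A ^ n) i0 j := by
      calc (A ^ m k) i0 k * ∑ j, (A ^ (n - m k)) k j
          = ∑ j, (A ^ m k) i0 k * (A ^ (n - m k)) k j := Finset.mul_sum _ _ _
        _ ≤ ∑ j, (A ^ (m k + (n - m k))) i0 j :=
            Finset.sum_le_sum fun j _ => pow_add_entry_ge A hA (m k) (n - m k) i0 k j
        _ = ∑ j, (A ^ n) i0 j := by rw [hexp]
    have h2 : c1 ^ (mS - m k) * ∑ j, (A ^ (n - mS)) k j ≤ ∑ j, (A ^ (n - m k)) k j := by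
      have h := rowsum_pow_add_ge A hA c1 hrs hc1.le (n - mS) (mS - m k) k
      rwa [show n - mS + (mS - m k) = n - m k from by omega] at h
    have h3 : c ^ mS ≤ c1 ^ (mS - m k) := by
      calc c ^ mS ≤ c ^ (mS - m k) := pow_le_pow_of_le_one hc0.le hcle1 (by omega)
        _ ≤ c1 ^ (mS - m k) := pow_le_pow_left₀ hc0.le (min_le_left _ _) _
    have hδk : δ ≤ (A ^ m k) i0 k := Finset.inf'_le _ (Finset.mem_univ k)
    have hRnn : 0 ≤ ∑ j, (A ^ (n - mS)) k j :=
      Finset.sum_nonneg fun j _ => pow_entry_nonneg A hA _ k j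
    calc δ * c ^ mS * ∑ j, (A ^ (n - mS)) k j
        ≤ (A ^ m k) i0 k * (c1 ^ (mS - m k) * ∑ j, (A ^ (n - mS)) k j) := by
          rw [mul_assoc]
          exact mul_le_mul hδk (mul_le_mul_of_nonneg_right h3 hRnn)
            (mul_nonneg (pow_nonneg hc0.le _) hRnn) (le_trans hδpos.le hδk)
      _ ≤ (A ^ m k) i0 k * ∑ j, (A ^ (n - m k)) k j :=
          mul_le_mul_of_nonneg_left h2 (le_trans hδpos.le hδk)
      _ ≤ ∑ j, (A ^ n) i0 j := h1
  -- sum the key bound over k and compare with the total sum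
  have hMR : δ * c ^ mS * ∑ k, ∑ j, (A ^ (n - mS)) k j ≤ (M:ℝ) * ∑ j, (A ^ n) i0 j := by
    rw [Finset.mul_sum]
    calc ∑ k, δ * c ^ mS * ∑ j, (A ^ (n - mS)) k j ≤ ∑ _k : Fin M, ∑ j, (A ^ n) i0 j :=
          Finset.sum_le_sum fun k _ => key k
      _ = (M:ℝ) * ∑ j, (A ^ n) i0 j := by
          rw [Finset.sum_const]; simp [nsmul_eq_mul]
  have hT : ∑ k, ∑ j, (A ^ n) k j ≤ c2 ^ mS * ∑ k, ∑ j, (A ^ (n - mS)) k j := by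
    have h := totsum_pow_add_le A hA c2 hrs2 hc2.le (n - mS) mS
    rwa [show n - mS + mS = n from by omega] at h
  rw [div_mul_eq_mul_div, div_le_iff₀ (by positivity)]
  calc δ * c ^ mS * ∑ k, ∑ j, (A ^ n) k j
      ≤ δ * c ^ mS * (c2 ^ mS * ∑ k, ∑ j, (A ^ (n - mS)) k j) :=
        mul_le_mul_of_nonneg_left hT (by positivity)
    _ = c2 ^ mS * (δ * c ^ mS * ∑ k, ∑ j, (A ^ (n - mS)) k j) := by ring
    _ ≤ c2 ^ mS * ((M:ℝ) * ∑ j, (A ^ n) i0 j) := mul_le_mul_of_nonneg_left hMR (by positivity)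
    _ = (∑ j, (A ^ n) i0 j) * ((M:ℝ) * c2 ^ mS) := by ring

lemma log_squeeze (T E : ℕ → ℝ) (hT : ∀ n, 0 < T n) (l : ℝ)
    (h : Tendsto (fun n : ℕ => (n:ℝ)⁻¹ * Real.log (T n)) atTop (nhds l))
    (K K' : ℝ) (hK : 0 < K) (hK' : 0 < K')
    (hE : ∀ᶠ n in atTop, K * T n ≤ E n ∧ E n ≤ K' * T n) :
    Tendsto (fun n : ℕ => (n:ℝ)⁻¹ * Real.log (E n)) atTop (nhds l) := by
  have hinv : Tendsto (fun n : ℕ => (n:ℝ)⁻¹) atTop (nhds 0) :=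
    tendsto_inv_atTop_nhds_zero_nat
  have hlow : Tendsto (fun n : ℕ => (n:ℝ)⁻¹ * Real.log K + (n:ℝ)⁻¹ * Real.log (T n))
      atTop (nhds l) := by
    simpa using (hinv.mul_const (Real.log K)).add h
  have hup : Tendsto (fun n : ℕ => (n:ℝ)⁻¹ * Real.log K' + (n:ℝ)⁻¹ * Real.log (T n))
      atTop (nhds l) := by
    simpa using (hinv.mul_const (Real.log K')).add h
  refine tendsto_of_tendsto_of_tendsto_of_le_of_le' hlow hup ?_ ?_
  · filter_upwards [hE] with n hn
    have hEpos : 0 < E n := lt_of_lt_of_le (mul_pos hK (hT n)) hn.1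
    have : Real.log K + Real.log (T n) ≤ Real.log (E n) := by
      rw [← Real.log_mul hK.ne' (hT n).ne']
      exact Real.log_le_log (mul_pos hK (hT n)) hn.1
    calc (n:ℝ)⁻¹ * Real.log K + (n:ℝ)⁻¹ * Real.log (T n)
        = (n:ℝ)⁻¹ * (Real.log K + Real.log (T n)) := by ring
      _ ≤ (n:ℝ)⁻¹ * Real.log (E n) := by
          apply mul_le_mul_of_nonneg_left this (by positivity)
  · filter_upwards [hE] with n hn
    have hEpos : 0 < E n := lt_of_lt_of_le (mul_pos hK (hT n)) hn.1
    have : Real.log (E n) ≤ Real.log K' + Real.log (T n) := by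
      rw [← Real.log_mul hK'.ne' (hT n).ne']
      exact Real.log_le_log hEpos hn.2
    calc (n:ℝ)⁻¹ * Real.log (E n) ≤ (n:ℝ)⁻¹ * (Real.log K' + Real.log (T n)) :=
          mul_le_mul_of_nonneg_left this (by positivity)
      _ = (n:ℝ)⁻¹ * Real.log K' + (n:ℝ)⁻¹ * Real.log (T n) := by ring

lemma norm_le_sum {M : ℕ} (A : Matrix (Fin M) (Fin M) ℝ) (h : ∀ i j, 0 ≤ A i j) :
    ‖A.map (fun x => (x:ℂ))‖ ≤ ∑ i, ∑ j, A i j := by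
  have hsum : ∀ i j, ‖(A.map (fun x => (x:ℂ))) i j‖ = A i j := by
    intro i j
    simp [Matrix.map_apply, Complex.norm_real, abs_of_nonneg (h i j)]
  have h1 : ‖A.map (fun x => (x:ℂ))‖₊ ≤ ∑ i, ∑ j, ‖(A.map (fun x => (x:ℂ))) i j‖₊ := by
    rw [Matrix.linfty_opNNNorm_def]
    apply Finset.sup_le
    intro i _
    exact Finset.single_le_sum (f := fun i => ∑ j, ‖(A.map (fun x => (x:ℂ))) i j‖₊)
      (fun _ _ => by positivity) (Finset.mem_univ i)
  calc ‖A.map (fun x => (x:ℂ))‖ ≤ ((∑ i, ∑ j, ‖(A.map (fun x => (x:ℂ))) i j‖₊ : ℝ≥0) : ℝ) := by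
        exact_mod_cast h1
    _ = ∑ i, ∑ j, A i j := by push_cast [coe_nnnorm]; simp only [hsum]


lemma sum_le_card_norm {M : ℕ} (A : Matrix (Fin M) (Fin M) ℝ) (h : ∀ i j, 0 ≤ A i j) :
    ∑ i, ∑ j, A i j ≤ M * ‖A.map (fun x => (x:ℂ))‖ := by
  have hsum : ∀ i j, ‖(A.map (fun x => (x:ℂ))) i j‖ = A i j := by
    intro i j
    simp [Matrix.map_apply, Complex.norm_real, abs_of_nonneg (h i j)]
  have h1 : ∑ i, ∑ j, ‖(A.map (fun x => (x:ℂ))) i j‖₊ ≤ M • ‖A.map (fun x => (x:ℂ))‖₊ := by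
    rw [Matrix.linfty_opNNNorm_def]
    have := Finset.sum_le_card_nsmul Finset.univ
      (fun i => ∑ j, ‖(A.map (fun x => (x:ℂ))) i j‖₊)
      (Finset.univ.sup fun i => ∑ j, ‖(A.map (fun x => (x:ℂ))) i j‖₊)
      (fun i _ => Finset.le_sup (f := fun i => ∑ j, ‖(A.map (fun x => (x:ℂ))) i j‖₊)
        (Finset.mem_univ i))
    simpa using this
  have h2 := (NNReal.coe_le_coe).2 h1
  push_cast [coe_nnnorm] at h2
  calc ∑ i, ∑ j, A i j = ∑ i, ∑ j, ‖(A.map (fun x => (x:ℂ))) i j‖ := by simp only [hsum]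
    _ ≤ M * ‖A.map (fun x => (x:ℂ))‖ := by
        rw [nsmul_eq_mul] at h2; exact_mod_cast h2

lemma map_pow_eq {M : ℕ} (A : Matrix (Fin M) (Fin M) ℝ) (n : ℕ) :
    (A.map (fun x => (x:ℂ))) ^ n = (A ^ n).map (fun x => (x:ℂ)) := by
  have h : ∀ B : Matrix (Fin M) (Fin M) ℝ, B.map (fun x => (x:ℂ))
      = (Complex.ofRealHom.mapMatrix : Matrix (Fin M) (Fin M) ℝ →+* _) B := fun _ => rfl
  rw [h, h, ← map_pow]

set_option maxHeartbeats 800000 in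
lemma specRad_ne_top {M : ℕ} (A : Matrix (Fin M) (Fin M) ℝ) :
    spectralRadius ℂ (A.map (fun x => (x : ℂ))) ≠ ⊤ := by
  refine ne_top_of_le_ne_top ?_
    (spectrum.spectralRadius_le_pow_nnnorm_pow_one_div ℂ (A.map (fun x => (x:ℂ))) 0)
  exact mul_ne_top (ENNReal.rpow_ne_top_of_nonneg (by norm_num) coe_ne_top)
    (ENNReal.rpow_ne_top_of_nonneg (by norm_num) coe_ne_top)

lemma tendsto_inv_log_sum {M : ℕ} [Nonempty (Fin M)] (A : Matrix (Fin M) (Fin M) ℝ)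
    (hA : ∀ n i j, 0 ≤ (A ^ n) i j) (c1 : ℝ) (hc1 : 0 < c1)
    (hT : ∀ n : ℕ, (M:ℝ) * c1 ^ n ≤ ∑ i, ∑ j, (A ^ n) i j) :
    Tendsto (fun n : ℕ => (n : ℝ)⁻¹ * Real.log (∑ i, ∑ j, (A ^ n) i j)) atTop
      (nhds (Real.log (specRad A))) := by
  have hMpos : (0:ℝ) < M := by
    have : 0 < M := Fin.pos_iff_nonempty.2 ‹_›
    exact_mod_cast this
  set B := A.map (fun x => (x:ℂ)) with hB
  set T : ℕ → ℝ := fun n => ∑ i, ∑ j, (A ^ n) i j with hTdef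
  have hTpos : ∀ n, 0 < T n := fun n =>
    lt_of_lt_of_le (by positivity) (hT n)
  have hUp : ∀ n, ‖B ^ n‖ ≤ T n := fun n => by
    rw [map_pow_eq]; exact norm_le_sum _ (hA n)
  have hLow : ∀ n, T n ≤ M * ‖B ^ n‖ := fun n => by
    rw [map_pow_eq]; exact sum_le_card_norm _ (hA n)
  have hNpos : ∀ n, 0 < ‖B ^ n‖ := fun n => by
    nlinarith [hTpos n, hLow n]
  have hnormlow : ∀ n, c1 ^ n ≤ ‖B ^ n‖ := fun n => by
    nlinarith [hT n, hLow n]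
  -- Gelfand
  have h1 := spectrum.pow_nnnorm_pow_one_div_tendsto_nhds_spectralRadius B
  have h2 : Tendsto (fun n : ℕ => ((‖B ^ n‖₊ : ℝ≥0∞) ^ (1 / (n:ℝ))).toReal) atTop
      (nhds (spectralRadius ℂ B).toReal) :=
    (ENNReal.tendsto_toReal (specRad_ne_top A)).comp h1
  have h3 : ∀ n : ℕ, ((‖B ^ n‖₊ : ℝ≥0∞) ^ (1 / (n:ℝ))).toReal = ‖B ^ n‖ ^ (1 / (n:ℝ)) := by
    intro n
    rw [← ENNReal.toReal_rpow]
    simp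
  have hb : Tendsto (fun n : ℕ => ‖B ^ n‖ ^ (1 / (n:ℝ))) atTop (nhds (specRad A)) := by
    simp only [h3] at h2; exact h2
  -- positivity of the spectral radius
  have hrad : c1 ≤ specRad A := by
    refine ge_of_tendsto hb ?_
    filter_upwards [eventually_ge_atTop 1] with n hn
    have hn' : (n:ℝ) ≠ 0 := Nat.cast_ne_zero.2 (by omega)
    calc c1 = (c1 ^ (n:ℝ)) ^ (1 / (n:ℝ)) := by
          rw [← Real.rpow_mul hc1.le]
          rw [mul_one_div, div_self hn', Real.rpow_one]
      _ ≤ ‖B ^ n‖ ^ (1 / (n:ℝ)) := by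
          apply Real.rpow_le_rpow (by positivity) _ (by positivity)
          rw [Real.rpow_natCast]
          exact hnormlow n
  have hρpos : 0 < specRad A := lt_of_lt_of_le hc1 hrad
  -- take logs
  have hlogb : Tendsto (fun n : ℕ => Real.log (‖B ^ n‖ ^ (1 / (n:ℝ)))) atTop
      (nhds (Real.log (specRad A))) :=
    ((Real.continuousAt_log hρpos.ne').tendsto).comp hb
  have hlogN : Tendsto (fun n : ℕ => (n:ℝ)⁻¹ * Real.log ‖B ^ n‖) atTop
      (nhds (Real.log (specRad A))) := by
    refine hlogb.congr' ?_
    filter_upwards [eventually_ge_atTop 1] with n hn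
    rw [Real.log_rpow (hNpos n), one_div]
  -- squeeze
  exact log_squeeze (fun n => ‖B ^ n‖) T hNpos _ hlogN 1 M one_pos hMpos
    (Eventually.of_forall fun n => ⟨by simpa using hUp n, hLow n⟩)

lemma path_sum (ν : Fin M → ℝ) (A : Matrix (Fin M) (Fin M) ℝ) :
    ∀ (n : ℕ) (jj : Fin M),
    ∑ p : Fin (n+1) → Fin M,
      (if p (Fin.last n) = jj then ν (p 0) * ∏ k : Fin n, A (p k.castSucc) (p k.succ) else 0)
      = Matrix.vecMul ν (A ^ n) jj := by
  intro n
  induction n with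
  | zero =>
    intro jj
    rw [← (Fin.snocEquiv (fun _ : Fin 1 => Fin M)).sum_comp
      (fun p => if p (Fin.last 0) = jj then ν (p 0) * ∏ k : Fin 0, A (p k.castSucc) (p k.succ)
        else 0), Fintype.sum_prod_type]
    simp only [Fin.snocEquiv_apply, Fin.snoc_last, Finset.univ_unique]
    have h0 : ∀ (q : Fin 0 → Fin M) (x : Fin M), (Fin.snoc q x : Fin 1 → Fin M) 0 = x := by
      intro q x
      have : (0 : Fin 1) = Fin.last 0 := rfl
      rw [this, Fin.snoc_last]
    simp only [h0]
    simp [Matrix.vecMul_one, Finset.sum_ite_eq']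
  | succ n ih =>
    intro jj
    rw [← (Fin.snocEquiv (fun _ : Fin (n+2) => Fin M)).sum_comp
      (fun p => if p (Fin.last (n+1)) = jj then
        ν (p 0) * ∏ k : Fin (n+1), A (p k.castSucc) (p k.succ) else 0),
      Fintype.sum_prod_type]
    simp only [Fin.snocEquiv_apply, Fin.snoc_last]
    have hterm : ∀ (x : Fin M) (q : Fin (n+1) → Fin M),
        (if x = jj then ν ((Fin.snoc q x : Fin (n+2) → Fin M) 0) *
            ∏ k : Fin (n+1), A ((Fin.snoc q x : Fin (n+2) → Fin M) k.castSucc)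
              ((Fin.snoc q x : Fin (n+2) → Fin M) k.succ) else 0)
        = if x = jj then
            (ν (q 0) * ∏ k : Fin n, A (q k.castSucc) (q k.succ)) * A (q (Fin.last n)) x
          else 0 := by
      intro x q
      have h0 : (Fin.snoc q x : Fin (n+2) → Fin M) 0 = q 0 := by
        have : (0 : Fin (n+2)) = Fin.castSucc 0 := rfl
        rw [this, Fin.snoc_castSucc]
      have hprod : ∏ k : Fin (n+1), A ((Fin.snoc q x : Fin (n+2) → Fin M) k.castSucc)
            ((Fin.snoc q x : Fin (n+2) → Fin M) k.succ)
          = (∏ k : Fin n, A (q k.castSucc) (q k.succ)) * A (q (Fin.last n)) x := by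
        rw [Fin.prod_univ_castSucc]
        congr 1
        · apply Finset.prod_congr rfl
          intro k _
          rw [Fin.succ_castSucc, Fin.snoc_castSucc, Fin.snoc_castSucc]
        · rw [Fin.succ_last, Fin.snoc_last, Fin.snoc_castSucc]
      by_cases hx : x = jj
      · rw [if_pos hx, if_pos hx, h0, hprod, mul_assoc]
      · rw [if_neg hx, if_neg hx]
    simp only [hterm]
    -- sum over x : only x = jj contributes
    rw [Finset.sum_comm]
    have hswap : ∀ q : Fin (n+1) → Fin M,
        ∑ x : Fin M, (if x = jj then
            (ν (q 0) * ∏ k : Fin n, A (q k.castSucc) (q k.succ)) * A (q (Fin.last n)) x else 0)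
        = ∑ i : Fin M, (if q (Fin.last n) = i then
            ν (q 0) * ∏ k : Fin n, A (q k.castSucc) (q k.succ) else 0) * A i jj := by
      intro q
      rw [Finset.sum_ite_eq' Finset.univ jj]
      simp only [Finset.mem_univ, if_true, ite_mul, zero_mul]
      rw [Finset.sum_ite_eq Finset.univ (q (Fin.last n))]
      simp
    simp only [hswap]
    rw [Finset.sum_comm]
    have : ∀ i : Fin M,
        ∑ q : Fin (n+1) → Fin M, (if q (Fin.last n) = i then
            ν (q 0) * ∏ k : Fin n, A (q k.castSucc) (q k.succ) else 0) * A i jj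
        = Matrix.vecMul ν (A ^ n) i * A i jj := by
      intro i
      rw [← Finset.sum_mul, ih i]
    simp only [this]
    rw [pow_succ]
    rw [← Matrix.vecMul_vecMul]
    rw [Matrix.vecMul]
    simp [Matrix.vecMul, dotProduct, mul_comm]

lemma cyl_measurable (X : ℕ → Ω → Fin M) (hmeas : ∀ n, Measurable (X n))
    (n : ℕ) (p : Fin (n+1) → Fin M) :
    MeasurableSet {ω | ∀ k : Fin (n+1), X k ω = p k} := by
  have : {ω | ∀ k : Fin (n+1), X k ω = p k} = ⋂ k : Fin (n+1), X k ⁻¹' {p k} := by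
    ext ω; simp [Set.mem_iInter, Set.mem_preimage]
  rw [this]
  exact MeasurableSet.iInter fun k => (hmeas k) (measurableSet_singleton (p k))

lemma integral_eq_sum_paths (μ : Measure Ω) [IsProbabilityMeasure μ]
    (X : ℕ → Ω → Fin M) (hmeas : ∀ n, Measurable (X n)) (n : ℕ)
    (g : (Fin (n+1) → Fin M) → ℝ) :
    ∫ ω, g (fun k => X k ω) ∂μ
      = ∑ p : Fin (n+1) → Fin M, g p * (μ {ω | ∀ k : Fin (n+1), X k ω = p k}).toReal := by
  have hpt : ∀ ω, g (fun k => X k ω)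
      = ∑ p : Fin (n+1) → Fin M,
          Set.indicator {ω | ∀ k : Fin (n+1), X k ω = p k} (fun _ => g p) ω := by
    intro ω
    rw [Finset.sum_eq_single (fun k : Fin (n+1) => X k ω)]
    · rw [Set.indicator_of_mem]
      exact fun k => rfl
    · intro p _ hp
      apply Set.indicator_of_notMem
      intro hmem
      exact hp (funext fun k => (hmem k).symm)
    · intro h
      exact absurd (Finset.mem_univ _) h
  rw [integral_congr_ae (Eventually.of_forall hpt)]
  rw [integral_finset_sum]
  · apply Finset.sum_congr rfl
    intro p _
    rw [integral_indicator_const _ (cyl_measurable X hmeas n p)]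
    rw [smul_eq_mul, mul_comm]; rfl
  · intro p _
    exact (integrable_const (g p)).indicator (cyl_measurable X hmeas n p)

lemma cyl_measure (μ : Measure Ω) (X : ℕ → Ω → Fin M)
    (Pmat : Matrix (Fin M) (Fin M) ℝ) (hnn : ∀ i j, 0 ≤ Pmat i j)
    (hmarkov : ∀ (n : ℕ) (path : Fin (n + 1) → Fin M) (j : Fin M),
      μ ({ω | ∀ k : Fin (n + 1), X k ω = path k} ∩ {ω | X (n + 1) ω = j})
        = μ {ω | ∀ k : Fin (n + 1), X k ω = path k} *
            ENNReal.ofReal (Pmat (path ⟨n, Nat.lt_succ_self n⟩) j)) :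
    ∀ (n : ℕ) (p : Fin (n+1) → Fin M),
    μ {ω | ∀ k : Fin (n+1), X k ω = p k}
      = μ {ω | X 0 ω = p 0} *
          ENNReal.ofReal (∏ k : Fin n, Pmat (p k.castSucc) (p k.succ)) := by
  intro n
  induction n with
  | zero =>
    intro p
    have hset : {ω | ∀ k : Fin 1, X k ω = p k} = {ω | X 0 ω = p 0} := by
      ext ω
      constructor
      · intro h; exact h 0
      · intro h k
        have : k = 0 := Subsingleton.elim k 0
        rw [this]; exact h
    rw [hset]
    simp
  | succ n ih =>
    intro p
    set q : Fin (n+1) → Fin M := fun k => p k.castSucc with hq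
    have hset : {ω | ∀ k : Fin (n+2), X k ω = p k}
        = {ω | ∀ k : Fin (n+1), X k ω = q k} ∩ {ω | X (n+1) ω = p (Fin.last (n+1))} := by
      ext ω
      constructor
      · intro h
        refine ⟨fun k => ?_, ?_⟩
        · have := h k.castSucc
          rwa [Fin.coe_castSucc] at this
        · have := h (Fin.last (n+1))
          rwa [Fin.val_last] at this
      · rintro ⟨h1, h2⟩ k
        refine Fin.lastCases ?_ (fun k => ?_) k
        · rw [Fin.val_last]; exact h2
        · simpa using h1 k
    rw [hset, hmarkov n q (p (Fin.last (n+1))), ih q]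
    have hq0 : q 0 = p 0 := rfl
    rw [hq0, mul_assoc, ← ENNReal.ofReal_mul (Finset.prod_nonneg fun k _ => hnn _ _)]
    congr 2
    rw [Fin.prod_univ_castSucc]
    congr 1

end MarkovAux
/-- **The scaled cumulant generating function of a finite irreducible Markov
additive process.** Let `{X n}` be a Markov chain on `{0, …, M-1}` with
irreducible transition matrix `Π` (arbitrary initial distribution), taking real
values `f 0, …, f (M-1)`, and let `S n = f (X 1) + ⋯ + f (X n)`.  Then for every
`θ ∈ ℝ`,
`λ(θ) = lim_n (1/n) log E[exp (θ S n)] = log ρ(Π D_θ)`,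
where `D_θ = diag (exp (θ f i))` and `ρ` is the spectral radius. -/
theorem markov_scgf_eq_log_spectralRadius
    {Ω : Type*} [MeasurableSpace Ω] (μ : Measure Ω) [IsProbabilityMeasure μ]
    (M : ℕ) (X : ℕ → Ω → Fin M) (hmeas : ∀ n, Measurable (X n))
    (Pmat : Matrix (Fin M) (Fin M) ℝ)
    -- `Π` is a stochastic matrix
    (hnn : ∀ i j, 0 ≤ Pmat i j) (hrow : ∀ i, ∑ j, Pmat i j = 1)
    -- `Π` is irreducible
    (hirr : ∀ i j, ∃ m : ℕ, 0 < (Pmat ^ m) i j)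
    (f : Fin M → ℝ)
    -- `{X n}` is a Markov chain with transition matrix `Π`
    (hmarkov : ∀ (n : ℕ) (path : Fin (n + 1) → Fin M) (j : Fin M),
      μ ({ω | ∀ k : Fin (n + 1), X k ω = path k} ∩ {ω | X (n + 1) ω = j})
        = μ {ω | ∀ k : Fin (n + 1), X k ω = path k} *
            ENNReal.ofReal (Pmat (path ⟨n, Nat.lt_succ_self n⟩) j)) :
    ∀ θ : ℝ,
      Tendsto
        (fun n : ℕ => (n : ℝ)⁻¹ *
          Real.log (∫ ω, Real.exp (θ * ∑ i ∈ Finset.range n, f (X (i + 1) ω)) ∂μ))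
        atTop (nhds (Real.log (specRad (Pmat * Dmat f θ)))) := by
  intro θ
  -- `Ω` and hence `Fin M` are nonempty
  have hΩ : Nonempty Ω := by
    by_contra h
    rw [not_nonempty_iff] at h
    have h1 : μ Set.univ = 1 := measure_univ
    rw [Set.univ_eq_empty_iff.2 h, measure_empty] at h1
    exact zero_ne_one h1
  haveI hFM : Nonempty (Fin M) := ⟨X 0 hΩ.some⟩
  set A : Matrix (Fin M) (Fin M) ℝ := Pmat * Dmat f θ with hAdef
  have hA : ∀ i j, A i j = Pmat i j * Real.exp (θ * f j) := by
    intro i j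
    rw [hAdef, Dmat, Matrix.mul_diagonal]
  -- bounds on the exponential weights
  set c1 : ℝ := Finset.univ.inf' Finset.univ_nonempty (fun j : Fin M => Real.exp (θ * f j))
    with hc1def
  set c2 : ℝ := Finset.univ.sup' Finset.univ_nonempty (fun j : Fin M => Real.exp (θ * f j))
    with hc2def
  have hc1pos : 0 < c1 := by
    rw [hc1def, Finset.lt_inf'_iff]
    exact fun j _ => Real.exp_pos _
  have hc1le : ∀ j, c1 ≤ Real.exp (θ * f j) := fun j =>
    Finset.inf'_le _ (Finset.mem_univ j)
  have hc2ge : ∀ j, Real.exp (θ * f j) ≤ c2 := fun j =>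
    Finset.le_sup' (f := fun j : Fin M => Real.exp (θ * f j)) (Finset.mem_univ j)
  -- A is entrywise nonnegative with row sums in [c1, c2]
  have hAnn : ∀ i j, 0 ≤ A i j := fun i j => by
    rw [hA]; exact mul_nonneg (hnn i j) (Real.exp_pos _).le
  have hrs1 : ∀ i, c1 ≤ ∑ j, A i j := by
    intro i
    calc c1 = ∑ j, Pmat i j * c1 := by rw [← Finset.sum_mul, hrow i, one_mul]
      _ ≤ ∑ j, A i j := Finset.sum_le_sum fun j _ => by
          rw [hA]; exact mul_le_mul_of_nonneg_left (hc1le j) (hnn i j)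
  have hrs2 : ∀ i, ∑ j, A i j ≤ c2 := by
    intro i
    calc ∑ j, A i j ≤ ∑ j, Pmat i j * c2 := Finset.sum_le_sum fun j _ => by
          rw [hA]; exact mul_le_mul_of_nonneg_left (hc2ge j) (hnn i j)
      _ = c2 := by rw [← Finset.sum_mul, hrow i, one_mul]
  -- A is irreducible
  have hirrA : ∀ i j, ∃ m : ℕ, 0 < (A ^ m) i j := by
    intro i j
    obtain ⟨m, hm⟩ := hirr i j
    have hle := MarkovAux.pow_entry_ge_smul A Pmat hnn c1 hc1pos.le
      (fun i j => by rw [hA, mul_comm c1]; exact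
        mul_le_mul_of_nonneg_left (hc1le j) (hnn i j)) m i j
    exact ⟨m, lt_of_lt_of_le (mul_pos (pow_pos hc1pos m) hm) hle⟩
  -- the initial distribution
  set ν : Fin M → ℝ := fun i => (μ {ω | X 0 ω = i}).toReal with hν
  have hν0 : ∀ i, 0 ≤ ν i := fun i => ENNReal.toReal_nonneg
  have hν1 : ∀ i, ν i ≤ 1 := fun i => by
    rw [hν]
    exact ENNReal.toReal_le_of_le_ofReal one_pos.le (by simpa using prob_le_one)
  have hνsum : ∑ i, ν i = 1 := by
    have hdisj : Pairwise (Function.onFun Disjoint fun i : Fin M => X 0 ⁻¹' {i}) := by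
      intro i j hij
      apply Set.disjoint_left.2
      intro ω hi hj
      apply hij
      rw [Set.mem_preimage, Set.mem_singleton_iff] at hi hj
      rw [← hi, ← hj]
    have hcover : (⋃ i : Fin M, X 0 ⁻¹' {i}) = Set.univ := by
      ext ω; simp
    have h1 := measure_iUnion (μ := μ) hdisj
      (fun i => (hmeas 0) (measurableSet_singleton i))
    rw [hcover, measure_univ, tsum_fintype] at h1
    have h2 : (∑ i, μ (X 0 ⁻¹' {i})).toReal = 1 := by rw [← h1]; simp
    rw [ENNReal.toReal_sum (fun i _ => measure_ne_top μ _)] at h2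
    rw [← h2]
    apply Finset.sum_congr rfl
    intro i _
    rfl
  obtain ⟨i0, hi0⟩ : ∃ i0, 0 < ν i0 := by
    by_contra h
    push_neg at h
    have : (1:ℝ) ≤ 0 := hνsum ▸ Finset.sum_nonpos fun i _ => h i
    linarith
  -- the expectation as a matrix product
  have hE : ∀ n : ℕ, (∫ ω, Real.exp (θ * ∑ i ∈ Finset.range n, f (X (i + 1) ω)) ∂μ)
      = ∑ jj, ∑ i, ν i * (A ^ n) i jj := by
    intro n
    have h0 : (∫ ω, Real.exp (θ * ∑ i ∈ Finset.range n, f (X (i + 1) ω)) ∂μ)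
        = ∑ p : Fin (n+1) → Fin M, Real.exp (θ * ∑ i : Fin n, f (p i.succ)) *
            (μ {ω | ∀ k : Fin (n+1), X k ω = p k}).toReal := by
      have hps := MarkovAux.integral_eq_sum_paths μ X hmeas n
        (fun p : Fin (n+1) → Fin M => Real.exp (θ * ∑ i : Fin n, f (p i.succ)))
      rw [← hps]
      apply integral_congr_ae
      apply Filter.Eventually.of_forall
      intro ω
      show Real.exp _ = Real.exp _
      congr 2
      rw [← Fin.sum_univ_eq_sum_range (fun i => f (X (i+1) ω)) n]
      exact Finset.sum_congr rfl fun i _ => rfl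
    rw [h0]
    have h2 : ∀ p : Fin (n+1) → Fin M,
        (μ {ω | ∀ k : Fin (n+1), X k ω = p k}).toReal
          = ν (p 0) * ∏ k : Fin n, Pmat (p k.castSucc) (p k.succ) := by
      intro p
      rw [MarkovAux.cyl_measure μ X Pmat hnn hmarkov n p, ENNReal.toReal_mul,
        ENNReal.toReal_ofReal (Finset.prod_nonneg fun k _ => hnn _ _)]
    have h3 : ∀ p : Fin (n+1) → Fin M,
        Real.exp (θ * ∑ i : Fin n, f (p i.succ)) *
            (ν (p 0) * ∏ k : Fin n, Pmat (p k.castSucc) (p k.succ))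
          = ν (p 0) * ∏ k : Fin n, A (p k.castSucc) (p k.succ) := by
      intro p
      rw [Finset.mul_sum, Real.exp_sum]
      have : ∏ k : Fin n, A (p k.castSucc) (p k.succ)
          = ∏ k : Fin n, (Pmat (p k.castSucc) (p k.succ) * Real.exp (θ * f (p k.succ))) :=
        Finset.prod_congr rfl fun k _ => hA _ _
      rw [this, Finset.prod_mul_distrib]
      ring
    calc ∑ p : Fin (n+1) → Fin M, Real.exp (θ * ∑ i : Fin n, f (p i.succ)) *
            (μ {ω | ∀ k : Fin (n+1), X k ω = p k}).toReal
        = ∑ p : Fin (n+1) → Fin M, ν (p 0) * ∏ k : Fin n, A (p k.castSucc) (p k.succ) := by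
          apply Finset.sum_congr rfl
          intro p _
          rw [h2 p, h3 p]
      _ = ∑ p : Fin (n+1) → Fin M, ∑ jj, (if p (Fin.last n) = jj then
            ν (p 0) * ∏ k : Fin n, A (p k.castSucc) (p k.succ) else 0) := by
          apply Finset.sum_congr rfl
          intro p _
          rw [Finset.sum_ite_eq Finset.univ (p (Fin.last n))]
          simp
      _ = ∑ jj, ∑ p : Fin (n+1) → Fin M, (if p (Fin.last n) = jj then
            ν (p 0) * ∏ k : Fin n, A (p k.castSucc) (p k.succ) else 0) := Finset.sum_comm
      _ = ∑ jj, ∑ i, ν i * (A ^ n) i jj := by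
          apply Finset.sum_congr rfl
          intro jj _
          rw [MarkovAux.path_sum ν A n jj]
          simp [Matrix.vecMul, dotProduct]
  -- total entry sum of Aⁿ
  set T : ℕ → ℝ := fun n => ∑ k, ∑ j, (A ^ n) k j with hT
  have hTlow : ∀ n : ℕ, (M:ℝ) * c1 ^ n ≤ T n := by
    intro n
    have h1 : ∀ k : Fin M, c1 ^ n * ∑ j, (A ^ 0) k j ≤ ∑ j, (A ^ (0 + n)) k j :=
      fun k => MarkovAux.rowsum_pow_add_ge A hAnn c1 hrs1 hc1pos.le 0 n k
    have h2 : ∀ k : Fin M, (∑ j, (A ^ 0) k j) = 1 := by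
      intro k
      simp [Matrix.one_apply]
    calc (M:ℝ) * c1 ^ n = ∑ _k : Fin M, c1 ^ n := by
          rw [Finset.sum_const]; simp [nsmul_eq_mul]
      _ ≤ ∑ k, ∑ j, (A ^ n) k j := Finset.sum_le_sum fun k _ => by
          have := h1 k
          rw [h2 k, mul_one, zero_add] at this
          exact this
  have hMpos : (0:ℝ) < M := by
    have : 0 < M := Fin.pos_iff_nonempty.2 hFM
    exact_mod_cast this
  have hTpos : ∀ n, 0 < T n := fun n =>
    lt_of_lt_of_le (mul_pos hMpos (pow_pos hc1pos n)) (hTlow n)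
  -- the squeeze between E and T
  have hEub : ∀ n : ℕ, (∑ jj, ∑ i, ν i * (A ^ n) i jj) ≤ T n := by
    intro n
    rw [hT]
    rw [Finset.sum_comm (γ := Fin M)]
    apply Finset.sum_le_sum
    intro i _
    apply Finset.sum_le_sum
    intro jj _
    calc ν i * (A ^ n) i jj ≤ 1 * (A ^ n) i jj :=
          mul_le_mul_of_nonneg_right (hν1 i) (MarkovAux.pow_entry_nonneg A hAnn n i jj)
      _ = (A ^ n) i jj := one_mul _
  obtain ⟨K', hK'pos, N, hKN⟩ := MarkovAux.exists_K A hAnn c1 c2 hc1pos hrs1 hrs2 hirrA i0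
  have hElb : ∀ n ≥ N, ν i0 * K' * T n ≤ ∑ jj, ∑ i, ν i * (A ^ n) i jj := by
    intro n hn
    have h1 : ν i0 * (∑ j, (A ^ n) i0 j) ≤ ∑ i, ν i * ∑ jj, (A ^ n) i jj :=
      Finset.single_le_sum (f := fun i => ν i * ∑ jj, (A ^ n) i jj)
        (fun i _ => mul_nonneg (hν0 i) (Finset.sum_nonneg fun j _ =>
          MarkovAux.pow_entry_nonneg A hAnn n i j)) (Finset.mem_univ i0)
    calc ν i0 * K' * T n = ν i0 * (K' * T n) := by ring
      _ ≤ ν i0 * (∑ j, (A ^ n) i0 j) :=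
          mul_le_mul_of_nonneg_left (hKN n hn) (hν0 i0)
      _ ≤ ∑ i, ν i * ∑ jj, (A ^ n) i jj := h1
      _ = ∑ jj, ∑ i, ν i * (A ^ n) i jj := by
          rw [Finset.sum_comm (γ := Fin M)]
          apply Finset.sum_congr rfl
          intro i _
          rw [Finset.mul_sum]
  -- conclusion
  have hTtendsto : Tendsto (fun n : ℕ => (n:ℝ)⁻¹ * Real.log (T n)) atTop
      (nhds (Real.log (specRad A))) :=
    MarkovAux.tendsto_inv_log_sum A (MarkovAux.pow_entry_nonneg A hAnn) c1 hc1pos hTlow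
  have hfinal := MarkovAux.log_squeeze T (fun n => ∑ jj, ∑ i, ν i * (A ^ n) i jj)
    hTpos _ hTtendsto (ν i0 * K') 1 (mul_pos hi0 hK'pos) one_pos
    (by
      filter_upwards [eventually_ge_atTop N] with n hn
      exact ⟨hElb n hn, by simpa using hEub n⟩)
  refine hfinal.congr ?_
  intro n
  rw [hE n]
end

section
/- Let A be an M × M matrix with nonnegative entries and let f(1), ..., f(M) be real numbers. Then the function θ ↦ log ρ(A D_θ), where D_θ is the diagonal matrix with diagonal entries exp(θ f(1)), ..., exp(θ f(M)) and ρ denotes the spectral radius, is a convex function of θ ∈ ℝ. -/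
open MeasureTheory Filter

namespace SpecRadAux

open Matrix Real Topology

attribute [local instance] Matrix.linftyOpNormedAddCommGroup Matrix.linftyOpNormedRing
  Matrix.linftyOpNormedAlgebra Matrix.linftyOpNormedSpace

variable {M : ℕ}

local instance : CompleteSpace (Matrix (Fin M) (Fin M) ℂ) :=
  (inferInstance : CompleteSpace (Fin M → Fin M → ℂ))

lemma coe_rowsum (S : Matrix (Fin M) (Fin M) ℝ) (i : Fin M) :
    ((∑ j, ‖S i j‖₊ : NNReal) : ℝ) = ∑ j, |S i j| := by
  push_cast
  simp [Real.norm_eq_abs]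

lemma rowsum_le_norm (S : Matrix (Fin M) (Fin M) ℝ) (i : Fin M) :
    ∑ j, |S i j| ≤ ‖S‖ := by
  rw [Matrix.linfty_opNorm_def, ← coe_rowsum S i]
  exact NNReal.coe_le_coe.mpr (Finset.le_sup (f := fun i => ∑ j, ‖S i j‖₊) (Finset.mem_univ i))

lemma norm_le_of_rows (S : Matrix (Fin M) (Fin M) ℝ) {c : ℝ} (hc : 0 ≤ c)
    (h : ∀ i, ∑ j, |S i j| ≤ c) : ‖S‖ ≤ c := by
  rw [Matrix.linfty_opNorm_def]
  have h2 : (Finset.univ.sup fun i => ∑ j, ‖S i j‖₊) ≤ c.toNNReal := by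
    refine Finset.sup_le fun i _ => ?_
    rw [← NNReal.coe_le_coe, coe_rowsum, Real.coe_toNNReal _ hc]
    exact h i
  exact (NNReal.coe_le_coe.mpr h2).trans_eq (Real.coe_toNNReal _ hc)

/-- Finite-sum Hölder inequality with weights `a, b`. -/
lemma holder_sum {a b : ℝ} (ha : 0 < a) (hb : 0 < b) (hab : a + b = 1)
    (u v : Fin M → ℝ) (hu : ∀ i, 0 ≤ u i) (hv : ∀ i, 0 ≤ v i) :
    ∑ i, u i ^ a * v i ^ b ≤ (∑ i, u i) ^ a * (∑ i, v i) ^ b := by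
  have ha1 : a < 1 := by linarith
  have hpq : Real.HolderConjugate (1 / a) (1 / b) := by
    constructor
    · rw [one_div, one_div, inv_inv, inv_inv, inv_one]; exact hab
    · positivity
    · positivity
  have h := Real.inner_le_Lp_mul_Lq_of_nonneg (s := Finset.univ)
    (f := fun i => u i ^ a) (g := fun i => v i ^ b) hpq
    (fun i _ => Real.rpow_nonneg (hu i) a) (fun i _ => Real.rpow_nonneg (hv i) b)
  simpa [← Real.rpow_mul, hu _, hv _, mul_one_div_cancel ha.ne', mul_one_div_cancel hb.ne',
    mul_inv_cancel₀ ha.ne', mul_inv_cancel₀ hb.ne', Real.rpow_one,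
    one_div_one_div] using h

/-- The key pointwise relation: `R` is entrywise dominated by the `(a,b)`-geometric
mean of `P` and `Q`, and everything is entrywise nonnegative. -/
def Rel (a b : ℝ) (R P Q : Matrix (Fin M) (Fin M) ℝ) : Prop :=
  (∀ i j, 0 ≤ R i j) ∧ (∀ i j, 0 ≤ P i j) ∧ (∀ i j, 0 ≤ Q i j) ∧
    ∀ i j, R i j ≤ P i j ^ a * Q i j ^ b

lemma Rel.mul {a b : ℝ} (ha : 0 < a) (hb : 0 < b) (hab : a + b = 1)
    {R P Q R' P' Q' : Matrix (Fin M) (Fin M) ℝ}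
    (h : Rel a b R P Q) (h' : Rel a b R' P' Q') :
    Rel a b (R * R') (P * P') (Q * Q') := by
  obtain ⟨hR, hP, hQ, hle⟩ := h
  obtain ⟨hR', hP', hQ', hle'⟩ := h'
  refine ⟨fun i j => ?_, fun i j => ?_, fun i j => ?_, fun i j => ?_⟩ <;>
    simp only [Matrix.mul_apply]
  · exact Finset.sum_nonneg fun k _ => mul_nonneg (hR _ _) (hR' _ _)
  · exact Finset.sum_nonneg fun k _ => mul_nonneg (hP _ _) (hP' _ _)
  · exact Finset.sum_nonneg fun k _ => mul_nonneg (hQ _ _) (hQ' _ _)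
  · calc ∑ k, R i k * R' k j
        ≤ ∑ k, (P i k * P' k j) ^ a * (Q i k * Q' k j) ^ b := by
          refine Finset.sum_le_sum fun k _ => ?_
          calc R i k * R' k j
              ≤ (P i k ^ a * Q i k ^ b) * (P' k j ^ a * Q' k j ^ b) :=
                mul_le_mul (hle _ _) (hle' _ _) (hR' _ _) (mul_nonneg (Real.rpow_nonneg (hP _ _) _) (Real.rpow_nonneg (hQ _ _) _))
            _ = (P i k * P' k j) ^ a * (Q i k * Q' k j) ^ b := by
                rw [Real.mul_rpow (hP _ _) (hP' _ _), Real.mul_rpow (hQ _ _) (hQ' _ _)]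
                ring
      _ ≤ (∑ k, P i k * P' k j) ^ a * (∑ k, Q i k * Q' k j) ^ b :=
          holder_sum ha hb hab _ _ (fun k => mul_nonneg (hP _ _) (hP' _ _))
            (fun k => mul_nonneg (hQ _ _) (hQ' _ _))

lemma Rel.pow {a b : ℝ} (ha : 0 < a) (hb : 0 < b) (hab : a + b = 1)
    {R P Q : Matrix (Fin M) (Fin M) ℝ} (h : Rel a b R P Q) (n : ℕ) :
    Rel a b (R ^ n) (P ^ n) (Q ^ n) := by
  induction n with
  | zero =>
    refine ⟨fun i j => ?_, fun i j => ?_, fun i j => ?_, fun i j => ?_⟩ <;>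
      simp only [pow_zero, Matrix.one_apply]
    · positivity
    · positivity
    · positivity
    · by_cases hij : i = j <;>
        simp [hij, Real.one_rpow, Real.zero_rpow ha.ne', Real.zero_rpow hb.ne']
  | succ n ih =>
    simpa [pow_succ] using ih.mul ha hb hab h

lemma Rel.norm_le {a b : ℝ} (ha : 0 < a) (hb : 0 < b) (hab : a + b = 1)
    {R P Q : Matrix (Fin M) (Fin M) ℝ} (h : Rel a b R P Q) :
    ‖R‖ ≤ ‖P‖ ^ a * ‖Q‖ ^ b := by
  obtain ⟨hR, hP, hQ, hle⟩ := h
  refine norm_le_of_rows R (by positivity) fun i => ?_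
  calc ∑ j, |R i j| = ∑ j, R i j := by
        refine Finset.sum_congr rfl fun j _ => abs_of_nonneg (hR _ _)
    _ ≤ ∑ j, P i j ^ a * Q i j ^ b := Finset.sum_le_sum fun j _ => hle _ _
    _ ≤ (∑ j, P i j) ^ a * (∑ j, Q i j) ^ b := holder_sum ha hb hab _ _ (hP i) (hQ i)
    _ ≤ ‖P‖ ^ a * ‖Q‖ ^ b := by
        have hP1 : ∑ j, P i j ≤ ‖P‖ := by
          calc ∑ j, P i j = ∑ j, |P i j| :=
                Finset.sum_congr rfl fun j _ => (abs_of_nonneg (hP _ _)).symm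
            _ ≤ ‖P‖ := rowsum_le_norm P i
        have hQ1 : ∑ j, Q i j ≤ ‖Q‖ := by
          calc ∑ j, Q i j = ∑ j, |Q i j| :=
                Finset.sum_congr rfl fun j _ => (abs_of_nonneg (hQ _ _)).symm
            _ ≤ ‖Q‖ := rowsum_le_norm Q i
        have h1 : (0:ℝ) ≤ ∑ j, P i j := Finset.sum_nonneg fun j _ => hP _ _
        have h2 : (0:ℝ) ≤ ∑ j, Q i j := Finset.sum_nonneg fun j _ => hQ _ _
        exact mul_le_mul (Real.rpow_le_rpow h1 hP1 ha.le)
          (Real.rpow_le_rpow h2 hQ1 hb.le) (Real.rpow_nonneg h2 b)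
          (Real.rpow_nonneg (norm_nonneg _) a)

/-- Gelfand's formula for `specRad`. -/
lemma tendsto_specRad [Nonempty (Fin M)] (B : Matrix (Fin M) (Fin M) ℝ) :
    Tendsto (fun n : ℕ => ‖B ^ n‖ ^ (1 / (n:ℝ))) atTop (𝓝 (specRad B)) := by
  set Bc := B.map (fun x => (x : ℂ)) with hBc
  have hmap : ∀ n : ℕ, (B ^ n).map (fun x => (x : ℂ)) = Bc ^ n := by
    intro n
    have := map_pow (RingHom.mapMatrix (algebraMap ℝ ℂ)) B n
    simpa using this
  have hnorm : ∀ S : Matrix (Fin M) (Fin M) ℝ, ‖S.map (fun x => (x : ℂ))‖₊ = ‖S‖₊ := by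
    intro S
    rw [Matrix.linfty_opNNNorm_def, Matrix.linfty_opNNNorm_def]
    congr 1
    ext i
    simp [Matrix.map_apply]
  have hfin : spectralRadius ℂ Bc ≠ ⊤ :=
    ((spectrum.spectralRadius_le_nnnorm (𝕜 := ℂ) Bc).trans_lt ENNReal.coe_lt_top).ne
  have h1 := spectrum.pow_nnnorm_pow_one_div_tendsto_nhds_spectralRadius Bc
  have h2 := (ENNReal.tendsto_toReal hfin).comp h1
  refine h2.congr fun n => ?_
  show (((‖Bc ^ n‖₊ : ENNReal) ^ (1 / (n:ℝ)))).toReal = ‖B ^ n‖ ^ (1 / (n:ℝ))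
  rw [← ENNReal.toReal_rpow]
  simp [← hmap n, hnorm]

lemma specRad_nonneg (B : Matrix (Fin M) (Fin M) ℝ) : 0 ≤ specRad B :=
  ENNReal.toReal_nonneg

/-- The main comparison: `ρ(R) ≤ ρ(P)^a ρ(Q)^b`. -/
lemma specRad_le_of_rel [Nonempty (Fin M)] {a b : ℝ} (ha : 0 < a) (hb : 0 < b)
    (hab : a + b = 1) {R P Q : Matrix (Fin M) (Fin M) ℝ} (h : Rel a b R P Q) :
    specRad R ≤ specRad P ^ a * specRad Q ^ b := by
  have hn : ∀ n : ℕ, ‖R ^ n‖ ^ (1 / (n:ℝ)) ≤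
      (‖P ^ n‖ ^ (1 / (n:ℝ))) ^ a * (‖Q ^ n‖ ^ (1 / (n:ℝ))) ^ b := by
    intro n
    have h1 := (h.pow ha hb hab n).norm_le ha hb hab
    calc ‖R ^ n‖ ^ (1 / (n:ℝ))
        ≤ (‖P ^ n‖ ^ a * ‖Q ^ n‖ ^ b) ^ (1 / (n:ℝ)) :=
          Real.rpow_le_rpow (norm_nonneg _) h1 (by positivity)
      _ = (‖P ^ n‖ ^ (1 / (n:ℝ))) ^ a * (‖Q ^ n‖ ^ (1 / (n:ℝ))) ^ b := by
          rw [Real.mul_rpow (Real.rpow_nonneg (norm_nonneg _) _)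
            (Real.rpow_nonneg (norm_nonneg _) _), ← Real.rpow_mul (norm_nonneg _),
            ← Real.rpow_mul (norm_nonneg _), ← Real.rpow_mul (norm_nonneg _),
            ← Real.rpow_mul (norm_nonneg _), mul_comm a, mul_comm b]
  have hP := (tendsto_specRad P).rpow_const (Or.inr ha.le)
  have hQ := (tendsto_specRad Q).rpow_const (Or.inr hb.le)
  exact le_of_tendsto_of_tendsto (tendsto_specRad R) (hP.mul hQ)
    (Filter.Eventually.of_forall hn)

/-- Domination: if `0 ≤ S ≤ T` entrywise then powers stay dominated. -/
lemma pow_entry_le {S T : Matrix (Fin M) (Fin M) ℝ}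
    (hS : ∀ i j, 0 ≤ S i j) (hT : ∀ i j, S i j ≤ T i j) (n : ℕ) :
    (∀ i j, 0 ≤ (S ^ n) i j) ∧ (∀ i j, (S ^ n) i j ≤ (T ^ n) i j) := by
  induction n with
  | zero =>
    constructor <;> intro i j <;> simp only [pow_zero, Matrix.one_apply]
    · positivity
    · exact le_rfl
  | succ n ih =>
    obtain ⟨ih0, ih1⟩ := ih
    constructor
    · intro i j
      rw [pow_succ]
      simp only [Matrix.mul_apply]
      exact Finset.sum_nonneg fun k _ => mul_nonneg (ih0 _ _) (hS _ _)
    · intro i j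
      rw [pow_succ, pow_succ]
      simp only [Matrix.mul_apply]
      refine Finset.sum_le_sum fun k _ => ?_
      exact mul_le_mul (ih1 _ _) (hT _ _) (hS _ _) ((ih0 _ _).trans (ih1 _ _))

/-- Domination of spectral radii: `ρ(S) ≤ c·ρ(T)` when `0 ≤ S ≤ c T` entrywise. -/
lemma specRad_le_mul [Nonempty (Fin M)] {S T : Matrix (Fin M) (Fin M) ℝ} {c : ℝ}
    (hc : 0 < c) (hS : ∀ i j, 0 ≤ S i j) (hT0 : ∀ i j, 0 ≤ T i j)
    (hST : ∀ i j, S i j ≤ c * T i j) :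
    specRad S ≤ c * specRad T := by
  have key : ∀ n : ℕ, ‖S ^ n‖ ≤ c ^ n * ‖T ^ n‖ := by
    intro n
    have h := pow_entry_le (T := c • T) hS (fun i j => by simpa using hST i j) n
    refine norm_le_of_rows _ (by positivity) fun i => ?_
    have h2 : ((c • T) ^ n) = c ^ n • T ^ n := smul_pow c T n
    calc ∑ j, |(S ^ n) i j| = ∑ j, (S ^ n) i j :=
          Finset.sum_congr rfl fun j _ => abs_of_nonneg ((h.1) _ _)
      _ ≤ ∑ j, ((c • T) ^ n) i j := Finset.sum_le_sum fun j _ => h.2 _ _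
      _ = ∑ j, |((c • T) ^ n) i j| := by
          refine Finset.sum_congr rfl fun j _ => (abs_of_nonneg ?_).symm
          exact le_trans (h.1 _ _) (h.2 _ _)
      _ ≤ ‖(c • T) ^ n‖ := rowsum_le_norm _ i
      _ = c ^ n * ‖T ^ n‖ := by
          rw [h2, norm_smul, Real.norm_eq_abs, abs_pow, abs_of_pos hc]
  have hev : ∀ᶠ n : ℕ in atTop, ‖S ^ n‖ ^ (1 / (n:ℝ)) ≤ c * ‖T ^ n‖ ^ (1 / (n:ℝ)) := by
    filter_upwards [eventually_ge_atTop 1] with n hn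
    have hn0 : (n:ℝ) ≠ 0 := Nat.cast_ne_zero.mpr (by omega)
    calc ‖S ^ n‖ ^ (1 / (n:ℝ)) ≤ (c ^ n * ‖T ^ n‖) ^ (1 / (n:ℝ)) :=
          Real.rpow_le_rpow (norm_nonneg _) (key n) (by positivity)
      _ = c * ‖T ^ n‖ ^ (1 / (n:ℝ)) := by
          rw [Real.mul_rpow (by positivity) (norm_nonneg _), ← Real.rpow_natCast c n,
            ← Real.rpow_mul hc.le, mul_one_div_cancel hn0, Real.rpow_one]
  exact le_of_tendsto_of_tendsto (tendsto_specRad S)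
    ((tendsto_const_nhds).mul (tendsto_specRad T)) hev

end SpecRadAux

set_option maxHeartbeats 1000000 in
/-- **Convexity of the log-spectral-radius.** Let `A` be an `M × M` matrix with
nonnegative entries and `f 0, …, f (M-1)` real numbers.  Then
`θ ↦ log ρ(A D_θ)` is convex on `ℝ`, where `D_θ = diag (exp (θ f i))` and `ρ`
denotes the spectral radius. -/
theorem convexOn_log_spectralRadius
    (M : ℕ) (A : Matrix (Fin M) (Fin M) ℝ) (hA : ∀ i j, 0 ≤ A i j)
    (f : Fin M → ℝ) :
    ConvexOn ℝ Set.univ fun θ : ℝ => Real.log (specRad (A * Dmat f θ)) := by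
  classical
  rcases Nat.eq_zero_or_pos M with hM | hM
  · -- trivial case `M = 0`
    subst hM
    have hconst : ∀ θ : ℝ, specRad (A * Dmat f θ) = 0 := by
      intro θ
      haveI : Subsingleton (Matrix (Fin 0) (Fin 0) ℂ) :=
        ⟨fun a b => by ext i j; exact i.elim0⟩
      have hemp : spectrum ℂ ((A * Dmat f θ).map (fun x => (x : ℂ))) = ∅ := by
        ext z
        simp only [Set.mem_empty_iff_false, iff_false, spectrum.mem_iff, not_not]
        exact isUnit_of_subsingleton _
      unfold specRad spectralRadius
      rw [hemp]
      simp
    simp only [hconst, Real.log_zero]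
    exact convexOn_const 0 convex_univ
  · haveI : Nonempty (Fin M) := Fin.pos_iff_nonempty.mp hM
    set B : ℝ → Matrix (Fin M) (Fin M) ℝ := fun θ => A * Dmat f θ with hB
    have hBapp : ∀ θ i j, B θ i j = A i j * Real.exp (θ * f j) := by
      intro θ i j
      rw [hB]
      simp [Dmat, Matrix.mul_diagonal]
    have hBnn : ∀ θ i j, 0 ≤ B θ i j := fun θ i j => by
      rw [hBapp]; exact mul_nonneg (hA i j) (Real.exp_pos _).le
    -- domination between any two parameters
    have hdom : ∀ θ θ' : ℝ, ∃ c : ℝ, 0 < c ∧ specRad (B θ) ≤ c * specRad (B θ') := by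
      intro θ θ'
      set c : ℝ := ∑ j, Real.exp ((θ - θ') * f j) with hc
      have hcpos : 0 < c := Finset.sum_pos (fun j _ => Real.exp_pos _) Finset.univ_nonempty
      refine ⟨c, hcpos, SpecRadAux.specRad_le_mul hcpos (hBnn θ) (hBnn θ') fun i j => ?_⟩
      rw [hBapp, hBapp, mul_comm c, mul_assoc]
      refine mul_le_mul_of_nonneg_left ?_ (hA i j)
      have h1 : Real.exp (θ * f j) = Real.exp ((θ - θ') * f j) * Real.exp (θ' * f j) := by
        rw [← Real.exp_add]; ring_nf
      rw [h1, mul_comm (Real.exp (θ' * f j))]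
      refine mul_le_mul_of_nonneg_right ?_ (Real.exp_pos _).le
      exact Finset.single_le_sum (f := fun j => Real.exp ((θ - θ') * f j))
        (fun j _ => (Real.exp_pos _).le) (Finset.mem_univ j)
    refine ⟨convex_univ, ?_⟩
    rintro x - y - a b ha hb hab
    simp only [smul_eq_mul]
    rcases eq_or_lt_of_le ha with rfl | ha'
    · simp only [zero_add] at hab
      subst hab
      simp
    rcases eq_or_lt_of_le hb with rfl | hb'
    · simp only [add_zero] at hab
      subst hab
      simp
    by_cases h0 : specRad (B 0) = 0
    · have hall : ∀ θ : ℝ, specRad (B θ) = 0 := by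
        intro θ
        obtain ⟨c, hc, hle⟩ := hdom θ 0
        have := SpecRadAux.specRad_nonneg (B θ)
        rw [h0, mul_zero] at hle
        linarith
      simp only [show ∀ θ, specRad (A * Dmat f θ) = 0 from hall, Real.log_zero, mul_zero, add_zero, le_refl]
    · have hpos : ∀ θ : ℝ, 0 < specRad (B θ) := by
        intro θ
        obtain ⟨c, hc, hle⟩ := hdom 0 θ
        rcases (SpecRadAux.specRad_nonneg (B θ)).lt_or_eq with h | h
        · exact h
        · exfalso; rw [← h, mul_zero] at hle
          exact h0 (le_antisymm hle (SpecRadAux.specRad_nonneg _))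
      -- the key Hölder relation
      have hrel : SpecRadAux.Rel a b (B (a * x + b * y)) (B x) (B y) := by
        refine ⟨hBnn _, hBnn _, hBnn _, fun i j => ?_⟩
        rw [hBapp, hBapp, hBapp]
        rw [Real.mul_rpow (hA i j) (Real.exp_pos _).le,
          Real.mul_rpow (hA i j) (Real.exp_pos _).le]
        have hAab : A i j ^ a * A i j ^ b = A i j := by
          rw [← Real.rpow_add' (hA i j) (by rw [hab]; norm_num), hab, Real.rpow_one]
        have hexp : Real.exp (x * f j) ^ a * Real.exp (y * f j) ^ b =
            Real.exp ((a * x + b * y) * f j) := by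
          rw [← Real.exp_mul, ← Real.exp_mul, ← Real.exp_add]
          ring_nf
        refine le_of_eq ?_
        calc A i j * Real.exp ((a * x + b * y) * f j)
            = (A i j ^ a * A i j ^ b) * (Real.exp (x * f j) ^ a * Real.exp (y * f j) ^ b) := by
              rw [hAab, hexp]
          _ = A i j ^ a * Real.exp (x * f j) ^ a * (A i j ^ b * Real.exp (y * f j) ^ b) := by
              ring
      have key := SpecRadAux.specRad_le_of_rel ha' hb' hab hrel
      calc Real.log (specRad (B (a * x + b * y)))
          ≤ Real.log (specRad (B x) ^ a * specRad (B y) ^ b) :=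
            Real.log_le_log (hpos _) key
        _ = a * Real.log (specRad (B x)) + b * Real.log (specRad (B y)) := by
            rw [Real.log_mul (Real.rpow_pos_of_pos (hpos x) a).ne' (Real.rpow_pos_of_pos (hpos y) b).ne',
              Real.log_rpow (hpos x), Real.log_rpow (hpos y)]
end

section
/- Let 0 < α < β < 1 and consider the two-state Markov chain {X(n)} on state space {-1, +1} with transition matrix Π = [[1-α, α], [β, 1-β]] (rows indexed by -1, +1). Then: (a) the stationary distribution is φ = (β/(α+β), α/(α+β)); and (b) Loynes' exponent equals θ* = log((1-α)/(1-β)), i.e. sup{θ : log ρ(Π D_θ) ≤ 0} = log((1-α)/(1-β)), where D_θ := diag(e^{-θ}, e^{θ}) and ρ is the spectral radius. -/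
set_option maxHeartbeats 800000

open MeasureTheory Filter

lemma spectrum_fin_two (A : Matrix (Fin 2) (Fin 2) ℝ) (r s : ℝ)
    (h1 : A 0 0 + A 1 1 = r + s) (h2 : A 0 0 * A 1 1 - A 0 1 * A 1 0 = r * s) :
    spectrum ℂ (A.map (fun x => (x : ℂ))) = {(r : ℂ), (s : ℂ)} := by
  have h1c : ((A 0 0 : ℂ)) + (A 1 1 : ℂ) = (r : ℂ) + (s : ℂ) := by exact_mod_cast h1
  have h2c : ((A 0 0 : ℂ)) * (A 1 1 : ℂ) - (A 0 1 : ℂ) * (A 1 0 : ℂ) = (r : ℂ) * (s : ℂ) := by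
    exact_mod_cast h2
  ext z
  rw [spectrum.mem_iff, Matrix.isUnit_iff_isUnit_det, isUnit_iff_ne_zero, not_not]
  have e00 : ((algebraMap ℂ (Matrix (Fin 2) (Fin 2) ℂ)) z - A.map (fun x => (x : ℂ))) 0 0
      = z - (A 0 0 : ℂ) := by
    simp [Matrix.algebraMap_matrix_apply]
  have e01 : ((algebraMap ℂ (Matrix (Fin 2) (Fin 2) ℂ)) z - A.map (fun x => (x : ℂ))) 0 1
      = -(A 0 1 : ℂ) := by
    simp [Matrix.algebraMap_matrix_apply]
  have e10 : ((algebraMap ℂ (Matrix (Fin 2) (Fin 2) ℂ)) z - A.map (fun x => (x : ℂ))) 1 0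
      = -(A 1 0 : ℂ) := by
    simp [Matrix.algebraMap_matrix_apply]
  have e11 : ((algebraMap ℂ (Matrix (Fin 2) (Fin 2) ℂ)) z - A.map (fun x => (x : ℂ))) 1 1
      = z - (A 1 1 : ℂ) := by
    simp [Matrix.algebraMap_matrix_apply]
  have hdet : ((algebraMap ℂ (Matrix (Fin 2) (Fin 2) ℂ)) z - A.map (fun x => (x : ℂ))).det
      = (z - r) * (z - s) := by
    rw [Matrix.det_fin_two, e00, e01, e10, e11]
    linear_combination (-z) * h1c + h2c
  rw [hdet, mul_eq_zero, sub_eq_zero, sub_eq_zero]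
  simp [Set.mem_insert_iff]

lemma specRad_fin_two (A : Matrix (Fin 2) (Fin 2) ℝ) (r s : ℝ)
    (h1 : A 0 0 + A 1 1 = r + s) (h2 : A 0 0 * A 1 1 - A 0 1 * A 1 0 = r * s) :
    specRad A = max |r| |s| := by
  unfold specRad
  rw [spectralRadius, spectrum_fin_two A r s h1 h2]
  have : (⨆ k ∈ ({(r : ℂ), (s : ℂ)} : Set ℂ), (‖k‖₊ : ENNReal))
      = (‖(r : ℂ)‖₊ : ENNReal) ⊔ (‖(s : ℂ)‖₊ : ENNReal) := by
    rw [iSup_insert, iSup_singleton]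
  rw [this, ENNReal.toReal_sup ENNReal.coe_ne_top ENNReal.coe_ne_top]
  simp [Real.norm_eq_abs]

/-- **The two-state example.** For `0 < α < β < 1`, the two-state Markov chain
with transition matrix `Π = [[1-α, α], [β, 1-β]]` (rows/columns indexed by the
states `-1, +1`, taking the values `f(-1) = -1`, `f(+1) = +1`) has
(a) stationary distribution `φ = (β/(α+β), α/(α+β))`, i.e. `φ Π = φ`; and
(b) Loynes' exponent `θ* = sup {θ : log ρ(Π D_θ) ≤ 0} = log ((1-α)/(1-β))`,
where `D_θ = diag (e^{-θ}, e^{θ})`. -/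
theorem two_state_example
    (α β : ℝ) (hα : 0 < α) (hαβ : α < β) (hβ : β < 1) :
    (Matrix.vecMul ![β / (α + β), α / (α + β)]
        (Matrix.of ![![1 - α, α], ![β, 1 - β]])
      = ![β / (α + β), α / (α + β)]) ∧
    sSup {θ : ℝ |
        Real.log (specRad
          (Matrix.of ![![1 - α, α], ![β, 1 - β]] *
            Matrix.diagonal ![Real.exp (-θ), Real.exp θ])) ≤ 0}
      = Real.log ((1 - α) / (1 - β)) := by
  have hα1 : α < 1 := hαβ.trans hβ
  have hβ0 : (0 : ℝ) < β := hα.trans hαβ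
  have hab : (0 : ℝ) < α + β := by linarith
  have h1β : (0 : ℝ) < 1 - β := by linarith
  have h1α : (0 : ℝ) < 1 - α := by linarith
  have hw1 : (1 : ℝ) < (1 - α) / (1 - β) := (one_lt_div h1β).2 (by linarith)
  constructor
  · funext j
    fin_cases j <;>
      simp [Matrix.vecMul, dotProduct, Fin.sum_univ_two] <;>
      · field_simp
        ring
  · have key : ∀ θ : ℝ,
        (Real.log (specRad
          (Matrix.of ![![1 - α, α], ![β, 1 - β]] *
            Matrix.diagonal ![Real.exp (-θ), Real.exp θ])) ≤ 0)
        ↔ θ ∈ Set.Icc (0 : ℝ) (Real.log ((1 - α) / (1 - β))) := by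
      intro θ
      set A := Matrix.of ![![1 - α, α], ![β, 1 - β]] *
            Matrix.diagonal ![Real.exp (-θ), Real.exp θ] with hA
      have hexp : Real.exp (-θ) * Real.exp θ = 1 := by
        rw [← Real.exp_add]; simp
      have hu : (0 : ℝ) < Real.exp θ := Real.exp_pos θ
      have hv : (0 : ℝ) < Real.exp (-θ) := Real.exp_pos (-θ)
      have hA00 : A 0 0 = (1 - α) * Real.exp (-θ) := by
        simp [hA, Matrix.mul_apply, Fin.sum_univ_two, Matrix.diagonal, Matrix.vecHead, Matrix.vecTail]
      have hA01 : A 0 1 = α * Real.exp θ := by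
        simp [hA, Matrix.mul_apply, Fin.sum_univ_two, Matrix.diagonal, Matrix.vecHead, Matrix.vecTail]
      have hA10 : A 1 0 = β * Real.exp (-θ) := by
        simp [hA, Matrix.mul_apply, Fin.sum_univ_two, Matrix.diagonal, Matrix.vecHead, Matrix.vecTail]
      have hA11 : A 1 1 = (1 - β) * Real.exp θ := by
        simp [hA, Matrix.mul_apply, Fin.sum_univ_two, Matrix.diagonal, Matrix.vecHead, Matrix.vecTail]
      set t : ℝ := (1 - α) * Real.exp (-θ) + (1 - β) * Real.exp θ with ht
      have ht0 : 0 < t := by rw [ht]; positivity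
      set Δ : ℝ := t ^ 2 - 4 * (1 - α - β) with hΔdef
      have hΔ : 0 < Δ := by
        rw [hΔdef, ht]
        nlinarith [sq_nonneg ((1 - α) * Real.exp (-θ) - (1 - β) * Real.exp θ),
          mul_pos hα hβ0, hexp, mul_pos h1α h1β]
      have hsq : Real.sqrt Δ ^ 2 = Δ := Real.sq_sqrt hΔ.le
      have hsqnn : 0 ≤ Real.sqrt Δ := Real.sqrt_nonneg Δ
      set r : ℝ := (t + Real.sqrt Δ) / 2 with hr
      set s : ℝ := (t - Real.sqrt Δ) / 2 with hs
      have h1 : A 0 0 + A 1 1 = r + s := by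
        rw [hA00, hA11, hr, hs, ht]; ring
      have h2 : A 0 0 * A 1 1 - A 0 1 * A 1 0 = r * s := by
        rw [hA00, hA11, hA01, hA10, hr, hs]
        have hsq' : Real.sqrt Δ ^ 2 = t ^ 2 - 4 * (1 - α - β) := by rw [hsq, hΔdef]
        rw [ht] at hsq'
        rw [ht]
        linear_combination ((1 : ℝ) - α - β) * hexp + (1 / 4 : ℝ) * hsq'
      have hr0 : 0 < r := by
        have : 0 ≤ Real.sqrt Δ := hsqnn
        rw [hr]; linarith
      have habs : |s| ≤ r := by
        rw [abs_le]
        constructor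
        · rw [hs, hr]; linarith
        · rw [hs, hr]; linarith
      have hmax : max |r| |s| = r := by
        rw [abs_of_pos hr0]
        exact max_eq_left habs
      rw [Set.mem_Icc, specRad_fin_two A r s h1 h2, hmax, Real.log_nonpos_iff hr0.le]
      clear h1 h2 hA00 hA01 hA10 hA11 habs hmax hA
      clear A
      clear_value t Δ r s
      have step1 : r ≤ 1 ↔ t ≤ 2 - α - β := by
        rw [hr, div_le_one (by norm_num : (0:ℝ) < 2), ← le_sub_iff_add_le',
          Real.sqrt_le_iff]
        constructor
        · rintro ⟨h9, h10⟩
          rw [hΔdef] at h10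
          nlinarith [h10]
        · intro h9
          refine ⟨by linarith, ?_⟩
          rw [hΔdef]
          nlinarith [h9]
      rw [step1]
      have step2 : t ≤ 2 - α - β ↔
          (1 ≤ Real.exp θ ∧ (1 - β) * Real.exp θ ≤ 1 - α) := by
        constructor
        · intro h9
          rw [ht] at h9
          have h10 := mul_le_mul_of_nonneg_right h9 hu.le
          have P' : ((1 - β) * Real.exp θ - (1 - α)) * (Real.exp θ - 1) ≤ 0 := by
            nlinarith [hexp, h10]
          rcases mul_nonpos_iff.mp P' with ⟨hx, hy⟩ | ⟨hx, hy⟩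
          · exfalso
            nlinarith [mul_le_mul_of_nonneg_left (by linarith : Real.exp θ ≤ 1) h1β.le]
          · exact ⟨by linarith, by linarith⟩
        · rintro ⟨h9, h10⟩
          rw [ht, ← mul_le_mul_iff_of_pos_right hu]
          have hprod : ((1 - β) * Real.exp θ - (1 - α)) * (Real.exp θ - 1) ≤ 0 :=
            mul_nonpos_of_nonpos_of_nonneg (by linarith) (by linarith)
          nlinarith [hexp, hprod]
      rw [step2]
      constructor
      · rintro ⟨h9, h10⟩
        constructor
        · by_contra hc
          push_neg at hc
          have : Real.exp θ < 1 := by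
            calc Real.exp θ < Real.exp 0 := Real.exp_lt_exp.2 hc
            _ = 1 := Real.exp_zero
          linarith
        · rw [Real.le_log_iff_exp_le (by positivity)]
          rw [le_div_iff₀ h1β]
          linarith
      · rintro ⟨h9, h10⟩
        constructor
        · calc (1:ℝ) = Real.exp 0 := Real.exp_zero.symm
            _ ≤ Real.exp θ := Real.exp_le_exp.2 h9
        · rw [Real.le_log_iff_exp_le (by positivity), le_div_iff₀ h1β] at h10
          linarith
    have hset : {θ : ℝ |
        Real.log (specRad
          (Matrix.of ![![1 - α, α], ![β, 1 - β]] *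
            Matrix.diagonal ![Real.exp (-θ), Real.exp θ])) ≤ 0}
        = Set.Icc (0 : ℝ) (Real.log ((1 - α) / (1 - β))) := Set.ext key
    rw [hset]
    exact csSup_Icc (Real.log_nonneg hw1.le)
end
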